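/- arXiv:1411.1100 — 3 statements merged into one kernel-verified Lean document; each statement's English description precedes it below -/
import Mathlib

section
/- Suppose there exists a constant C ≥ 0 such that for all finite families T₁,...,Tₘ in a set M of continuous linear operators from X to Y and all x₁,...,xₘ ∈ X one has (∑ᵢ ‖Tᵢ(xᵢ)‖^p)^{1/p} ≤ C · sup_{φ ∈ B_{X*}} (∑ᵢ |φ(xᵢ)|^p)^{1/p}. Then M is uniformly dominated: there is a positive finite Borel measure μ on B_{X*} (with μ(B_{X*}) ≤ C^p) such that ‖T(x)‖^p ≤ ∫_{B_{X*}} |φ(x)|^p dμ(φ) for all T ∈ M and x ∈ X. -/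
open MeasureTheory

noncomputable section

variable {X : Type*} [NormedAddCommGroup X] [NormedSpace ℝ X] [CompleteSpace X]
variable {Y : Type*} [NormedAddCommGroup Y] [NormedSpace ℝ Y] [CompleteSpace Y]

/-- The closed unit ball of the dual of `X`, with the weak-star topology. -/
def dualBall (X : Type*) [NormedAddCommGroup X] [NormedSpace ℝ X] : Set (WeakDual ℝ X) :=
  {φ | ∀ x : X, ‖φ x‖ ≤ ‖x‖}

instance (X : Type*) [NormedAddCommGroup X] [NormedSpace ℝ X] :
    MeasurableSpace (dualBall X) := borel _

instance (X : Type*) [NormedAddCommGroup X] [NormedSpace ℝ X] :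
    BorelSpace (dualBall X) := ⟨rfl⟩

/-- `T` satisfies the absolutely `p`-summing inequality with constant `C`. -/
def SummingWith (p : ℝ) (T : X →L[ℝ] Y) (C : ℝ) : Prop :=
  ∀ (m : ℕ) (x : Fin m → X),
    (∑ i, ‖T (x i)‖ ^ p) ^ (1 / p) ≤
      C * ⨆ φ : dualBall X, (∑ i, ‖(φ : WeakDual ℝ X) (x i)‖ ^ p) ^ (1 / p)

/-- `T` is absolutely `p`-summing. -/
def AbsolutelySumming (p : ℝ) (T : X →L[ℝ] Y) : Prop :=
  ∃ C : ℝ, 0 ≤ C ∧ SummingWith p T C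

/-- The absolutely `p`-summing norm `π_p(T)`. -/
def piNorm (p : ℝ) (T : X →L[ℝ] Y) : ℝ :=
  sInf {C : ℝ | 0 ≤ C ∧ SummingWith p T C}

/-- `M` is uniformly dominated by the measure `μ` on the dual unit ball. -/
def UniformlyDominatedBy (p : ℝ) (M : Set (X →L[ℝ] Y)) (μ : Measure (dualBall X)) : Prop :=
  ∀ T ∈ M, ∀ x : X, ‖T x‖ ^ p ≤ ∫ φ : dualBall X, ‖(φ : WeakDual ℝ X) x‖ ^ p ∂μ

section MiniRMKSection
open MeasureTheory Set TopologicalSpace Finset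
open scoped NNReal ENNReal
set_option linter.unusedSectionVars false
set_option linter.unusedVariables false

namespace MiniRMK

variable {K : Type*} [TopologicalSpace K] [CompactSpace K] [T2Space K]
variable (Λ : C(K, ℝ) →ₗ[ℝ] ℝ)

/-- Admissible test values for a set. -/
def admits (s : Set K) : Set ℝ :=
  {r | ∃ f : C(K, ℝ), (∀ x, 0 ≤ f x) ∧ (∀ x ∈ s, 1 ≤ f x) ∧ Λ f = r}

/-- The Riesz content (real-valued). -/
def lamR (s : Set K) : ℝ := sInf (admits Λ s)

variable {Λ}

lemma admits_nonempty (hΛ : ∀ f : C(K, ℝ), (∀ x, 0 ≤ f x) → 0 ≤ Λ f) (s : Set K) :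
    (admits Λ s).Nonempty :=
  ⟨Λ 1, 1, fun _ => zero_le_one, fun _ _ => le_refl _, rfl⟩

lemma admits_bddBelow (hΛ : ∀ f : C(K, ℝ), (∀ x, 0 ≤ f x) → 0 ≤ Λ f) (s : Set K) :
    BddBelow (admits Λ s) := by
  refine ⟨0, fun r hr => ?_⟩
  obtain ⟨f, hf0, _, rfl⟩ := hr
  exact hΛ f hf0

lemma lamR_nonneg (hΛ : ∀ f : C(K, ℝ), (∀ x, 0 ≤ f x) → 0 ≤ Λ f) (s : Set K) :
    0 ≤ lamR Λ s :=
  le_csInf (admits_nonempty hΛ s) (fun r hr => by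
    obtain ⟨f, hf0, _, rfl⟩ := hr; exact hΛ f hf0)

lemma lamR_le (hΛ : ∀ f : C(K, ℝ), (∀ x, 0 ≤ f x) → 0 ≤ Λ f) {s : Set K} {f : C(K, ℝ)}
    (hf0 : ∀ x, 0 ≤ f x) (hf1 : ∀ x ∈ s, 1 ≤ f x) : lamR Λ s ≤ Λ f :=
  csInf_le (admits_bddBelow hΛ s) ⟨f, hf0, hf1, rfl⟩

lemma lamR_mono (hΛ : ∀ f : C(K, ℝ), (∀ x, 0 ≤ f x) → 0 ≤ Λ f) {s t : Set K} (hst : s ⊆ t) :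
    lamR Λ s ≤ lamR Λ t := by
  refine csInf_le_csInf (admits_bddBelow hΛ s) (admits_nonempty hΛ t) ?_
  rintro r ⟨f, hf0, hf1, rfl⟩
  exact ⟨f, hf0, fun x hx => hf1 x (hst hx), rfl⟩

/-- Monotonicity of a positive functional. -/
lemma lin_mono (hΛ : ∀ f : C(K, ℝ), (∀ x, 0 ≤ f x) → 0 ≤ Λ f) {f g : C(K, ℝ)}
    (hfg : ∀ x, f x ≤ g x) : Λ f ≤ Λ g := by
  have := hΛ (g - f) (fun x => by simpa using hfg x)
  have h2 : Λ (g - f) = Λ g - Λ f := by rw [map_sub]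
  linarith [this, h2.le]

lemma exists_admits_lt (hΛ : ∀ f : C(K, ℝ), (∀ x, 0 ≤ f x) → 0 ≤ Λ f) (s : Set K) {ε : ℝ}
    (hε : 0 < ε) : ∃ f : C(K, ℝ), (∀ x, 0 ≤ f x) ∧ (∀ x ∈ s, 1 ≤ f x) ∧ Λ f < lamR Λ s + ε := by
  obtain ⟨r, hr, hrlt⟩ := exists_lt_of_csInf_lt (admits_nonempty hΛ s)
    (lt_add_of_pos_right (lamR Λ s) hε)
  obtain ⟨f, hf0, hf1, rfl⟩ := hr
  exact ⟨f, hf0, hf1, hrlt⟩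

variable (Λ)

/-- The Riesz content as a `Content`. -/
def rieszContent (hΛ : ∀ f : C(K, ℝ), (∀ x, 0 ≤ f x) → 0 ≤ Λ f) : Content K where
  toFun Kc := (lamR Λ Kc).toNNReal
  mono' K₁ K₂ hK := by
    exact Real.toNNReal_mono (lamR_mono hΛ hK)
  sup_le' K₁ K₂ := by
    have key : lamR Λ (K₁ ⊔ K₂ : Compacts K) ≤ lamR Λ K₁ + lamR Λ K₂ := by
      refine le_of_forall_pos_le_add (fun ε hε => ?_)
      obtain ⟨f₁, hf₁0, hf₁1, hf₁⟩ := exists_admits_lt hΛ (K₁ : Set K) (half_pos hε)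
      obtain ⟨f₂, hf₂0, hf₂1, hf₂⟩ := exists_admits_lt hΛ (K₂ : Set K) (half_pos hε)
      have : lamR Λ (K₁ ⊔ K₂ : Compacts K) ≤ Λ (f₁ + f₂) := by
        refine lamR_le hΛ (fun x => add_nonneg (hf₁0 x) (hf₂0 x)) (fun x hx => ?_)
        rcases (show x ∈ (K₁ : Set K) ∪ (K₂ : Set K) from hx) with hx | hx
        · have := hf₁1 x hx
          have := hf₂0 x
          simp only [ContinuousMap.add_apply]; linarith
        · have := hf₂1 x hx
          have := hf₁0 x
          simp only [ContinuousMap.add_apply]; linarith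
      rw [map_add] at this
      linarith
    calc ((lamR Λ (K₁ ⊔ K₂ : Compacts K)).toNNReal : ℝ≥0)
        ≤ (lamR Λ K₁ + lamR Λ K₂).toNNReal := Real.toNNReal_mono key
      _ ≤ (lamR Λ K₁).toNNReal + (lamR Λ K₂).toNNReal := Real.toNNReal_add_le
  sup_disjoint' K₁ K₂ hdisj _ _ := by
    have h₁ : lamR Λ (K₁ ⊔ K₂ : Compacts K) ≤ lamR Λ K₁ + lamR Λ K₂ := by
      refine le_of_forall_pos_le_add (fun ε hε => ?_)
      obtain ⟨f₁, hf₁0, hf₁1, hf₁⟩ := exists_admits_lt hΛ (K₁ : Set K) (half_pos hε)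
      obtain ⟨f₂, hf₂0, hf₂1, hf₂⟩ := exists_admits_lt hΛ (K₂ : Set K) (half_pos hε)
      have : lamR Λ (K₁ ⊔ K₂ : Compacts K) ≤ Λ (f₁ + f₂) := by
        refine lamR_le hΛ (fun x => add_nonneg (hf₁0 x) (hf₂0 x)) (fun x hx => ?_)
        rcases (show x ∈ (K₁ : Set K) ∪ (K₂ : Set K) from hx) with hx | hx
        · have := hf₁1 x hx
          have := hf₂0 x
          simp only [ContinuousMap.add_apply]; linarith
        · have := hf₂1 x hx
          have := hf₁0 x
          simp only [ContinuousMap.add_apply]; linarith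
      rw [map_add] at this
      linarith
    have h₂ : lamR Λ K₁ + lamR Λ K₂ ≤ lamR Λ (K₁ ⊔ K₂ : Compacts K) := by
      -- Urysohn separation
      obtain ⟨g, hg0, hg1, hg01⟩ := exists_continuous_zero_one_of_isCompact
        K₂.isCompact K₁.isCompact.isClosed hdisj.symm
      -- g = 0 on K₂, g = 1 on K₁, 0 ≤ g ≤ 1
      refine le_csInf (admits_nonempty hΛ _) ?_
      rintro r ⟨f, hf0, hf1, rfl⟩
      have e₁ : lamR Λ K₁ ≤ Λ (f * g) := by
        refine lamR_le hΛ (fun x => mul_nonneg (hf0 x) (hg01 x).1) (fun x hx => ?_)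
        have : g x = 1 := hg1 hx
        have hfx : 1 ≤ f x := hf1 x (Or.inl hx)
        simp only [ContinuousMap.mul_apply, this, mul_one]
        exact hfx
      have e₂ : lamR Λ K₂ ≤ Λ (f * (1 - g)) := by
        refine lamR_le hΛ (fun x => mul_nonneg (hf0 x) (by simpa using (hg01 x).2))
          (fun x hx => ?_)
        have : g x = 0 := hg0 hx
        have hfx : 1 ≤ f x := hf1 x (Or.inr hx)
        simp only [ContinuousMap.mul_apply, ContinuousMap.sub_apply, ContinuousMap.one_apply,
          this, sub_zero, mul_one]
        exact hfx
      have : f * g + f * (1 - g) = f := by ring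
      have esum : Λ (f * g) + Λ (f * (1 - g)) = Λ f := by
        rw [← map_add, this]
      linarith
    have heq : lamR Λ (K₁ ⊔ K₂ : Compacts K) = lamR Λ K₁ + lamR Λ K₂ := le_antisymm h₁ h₂
    show (lamR Λ (K₁ ⊔ K₂ : Compacts K)).toNNReal = (lamR Λ K₁).toNNReal + (lamR Λ K₂).toNNReal
    rw [heq, Real.toNNReal_add (lamR_nonneg hΛ _) (lamR_nonneg hΛ _)]

variable [MeasurableSpace K] [BorelSpace K]

/-- The Riesz measure. -/
def rieszMeasure (hΛ : ∀ f : C(K, ℝ), (∀ x, 0 ≤ f x) → 0 ≤ Λ f) : Measure K :=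
  (rieszContent Λ hΛ).measure

lemma rieszMeasure_univ_le (hΛ : ∀ f : C(K, ℝ), (∀ x, 0 ≤ f x) → 0 ≤ Λ f) :
    rieszMeasure Λ hΛ Set.univ ≤ ENNReal.ofReal (Λ 1) := by
  have h1 : rieszMeasure Λ hΛ Set.univ = (rieszContent Λ hΛ).outerMeasure Set.univ :=
    Content.measure_apply _ MeasurableSet.univ
  rw [h1, (rieszContent Λ hΛ).outerMeasure_of_isOpen Set.univ isOpen_univ]
  have h2 : (rieszContent Λ hΛ).innerContent ⟨Set.univ, isOpen_univ⟩
      ≤ (rieszContent Λ hΛ) ⟨Set.univ, isCompact_univ⟩ :=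
    (rieszContent Λ hΛ).innerContent_le _ _ (subset_refl _)
  refine h2.trans ?_
  show ((lamR Λ (Set.univ : Set K)).toNNReal : ℝ≥0∞) ≤ ENNReal.ofReal (Λ 1)
  rw [ENNReal.ofReal]
  exact_mod_cast Real.toNNReal_mono (lamR_le hΛ (fun _ => zero_le_one) (fun _ _ => le_refl _))

instance (hΛ : ∀ f : C(K, ℝ), (∀ x, 0 ≤ f x) → 0 ≤ Λ f) :
    IsFiniteMeasure (rieszMeasure Λ hΛ) := by
  constructor
  exact lt_of_le_of_lt (rieszMeasure_univ_le Λ hΛ) ENNReal.ofReal_lt_top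

lemma lamR_le_measure (hΛ : ∀ f : C(K, ℝ), (∀ x, 0 ≤ f x) → 0 ≤ Λ f) {s : Set K}
    (hs : IsClosed s) : lamR Λ s ≤ (rieszMeasure Λ hΛ s).toReal := by
  have hc : IsCompact s := hs.isCompact
  have h1 : ((rieszContent Λ hΛ) ⟨s, hc⟩ : ℝ≥0∞) ≤ (rieszContent Λ hΛ).outerMeasure s :=
    (rieszContent Λ hΛ).le_outerMeasure_compacts ⟨s, hc⟩
  have h2 : rieszMeasure Λ hΛ s = (rieszContent Λ hΛ).outerMeasure s :=
    Content.measure_apply _ hs.measurableSet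
  have h3 : ((lamR Λ s).toNNReal : ℝ≥0∞) ≤ rieszMeasure Λ hΛ s := by rw [h2]; exact h1
  have hfin : rieszMeasure Λ hΛ s ≠ ⊤ := measure_ne_top _ _
  have := ENNReal.toReal_mono hfin h3
  rw [ENNReal.coe_toReal, Real.coe_toNNReal _ (lamR_nonneg hΛ s)] at this
  exact this



lemma sum_clamp {δ : ℝ} (hδ : 0 < δ) (n : ℕ) (v : ℝ) (hv1 : 0 ≤ v) (hv2 : v ≤ n * δ) :
    ∑ i ∈ Finset.range n, min (max ((v - (i : ℝ) * δ) / δ) 0) 1 = v / δ := by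
  induction n with
  | zero =>
    have : v = 0 := le_antisymm (by simpa using hv2) hv1
    simp [this]
  | succ n ih =>
    rw [Finset.sum_range_succ]
    rcases le_or_gt v ((n : ℝ) * δ) with hc | hc
    · rw [ih hc]
      have hle : (v - (n : ℝ) * δ) / δ ≤ 0 :=
        div_nonpos_of_nonpos_of_nonneg (by linarith) hδ.le
      rw [max_eq_right hle, min_eq_left zero_le_one, add_zero]
    · have hterm : ∀ i ∈ Finset.range n, min (max ((v - (i : ℝ) * δ) / δ) 0) 1 = 1 := by
        intro i hi
        have hin : (i : ℝ) + 1 ≤ (n : ℝ) := by exact_mod_cast Finset.mem_range.1 hi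
        have h1 : 1 ≤ (v - (i : ℝ) * δ) / δ := by
          rw [le_div_iff₀ hδ]; nlinarith
        rw [max_eq_left (le_trans zero_le_one h1), min_eq_right h1]
      rw [Finset.sum_congr rfl hterm, Finset.sum_const, Finset.card_range]
      have hv2' : v ≤ ((n : ℝ) + 1) * δ := by push_cast at hv2; linarith
      have hle1 : (v - (n : ℝ) * δ) / δ ≤ 1 := by rw [div_le_one hδ]; linarith
      have hge0 : 0 ≤ (v - (n : ℝ) * δ) / δ := (div_pos (by linarith) hδ).le
      rw [max_eq_left hge0, min_eq_left hle1, nsmul_eq_mul, mul_one]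
      field_simp
      ring


theorem le_integral (hΛ : ∀ f : C(K, ℝ), (∀ x, 0 ≤ f x) → 0 ≤ Λ f) (f : C(K, ℝ))
    (hf : ∀ x, 0 ≤ f x) : Λ f ≤ ∫ x, f x ∂(rieszMeasure Λ hΛ) := by
  set μ := rieszMeasure Λ hΛ with hμdef
  refine le_of_forall_pos_le_add (fun ε hε => ?_)
  have hΛ1 : 0 ≤ Λ 1 := hΛ 1 (fun _ => zero_le_one)
  set δ := ε / (Λ 1 + 1) with hδdef
  have hδ : 0 < δ := div_pos hε (by linarith)
  set m := ⌈‖f‖ / δ⌉₊ with hmdef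
  set n := m + 1 with hndef
  have hfn : ∀ x, f x ≤ (n : ℝ) * δ := by
    intro x
    have h1 : f x ≤ ‖f‖ := le_trans (le_abs_self _) (f.norm_coe_le_norm x)
    have h2 : ‖f‖ / δ ≤ (m : ℝ) := Nat.le_ceil _
    have h3 : ‖f‖ ≤ (m : ℝ) * δ := by
      rw [div_le_iff₀ hδ] at h2; linarith
    have : (m : ℝ) ≤ (n : ℝ) := by exact_mod_cast Nat.le_succ m
    nlinarith
  -- the layer functions
  have hcont : ∀ i : ℕ, Continuous (fun x => min (max ((f x - (i : ℝ) * δ) / δ) 0) 1) := by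
    intro i
    exact (((f.continuous.sub continuous_const).div_const δ).max continuous_const).min
      continuous_const
  set h : ℕ → C(K, ℝ) := fun i => ⟨fun x => min (max ((f x - (i : ℝ) * δ) / δ) 0) 1, hcont i⟩
    with hhdef
  have hid : f = δ • ∑ i ∈ Finset.range n, h i := by
    ext x
    have := sum_clamp hδ n (f x) (hf x) (hfn x)
    simp only [ContinuousMap.smul_apply, ContinuousMap.coe_sum, Finset.sum_apply, smul_eq_mul]
    rw [hhdef]
    simp only [ContinuousMap.coe_mk]
    rw [this, mul_div_cancel₀ _ hδ.ne']
  have hΛf : Λ f = δ * ((∑ i ∈ Finset.range m, Λ (h (i + 1))) + Λ (h 0)) := by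
    rw [hid, _root_.map_smul, map_sum, smul_eq_mul, hndef, Finset.sum_range_succ']
  -- the superlevel sets
  set S : ℕ → Set K := fun j => {x | (j : ℝ) * δ ≤ f x} with hSdef
  have hSclosed : ∀ j, IsClosed (S j) := fun j => isClosed_le continuous_const f.continuous
  -- bound each layer functional by the measure of the superlevel set
  have hlayer : ∀ j : ℕ, 1 ≤ j → Λ (h j) ≤ (μ (S j)).toReal := by
    intro j hj
    have h1 : Λ (h j) ≤ lamR Λ (S j) := by
      refine le_csInf (admits_nonempty hΛ _) ?_
      rintro r ⟨g, hg0, hg1, rfl⟩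
      refine lin_mono hΛ (fun x => ?_)
      rcases le_or_gt ((j : ℝ) * δ) (f x) with hx | hx
      · exact le_trans (min_le_right _ _) (hg1 x hx)
      · have : (f x - (j : ℝ) * δ) / δ ≤ 0 :=
          div_nonpos_of_nonpos_of_nonneg (by linarith) hδ.le
        show min (max ((f x - (j : ℝ) * δ) / δ) 0) 1 ≤ g x
        rw [max_eq_right this, min_eq_left zero_le_one]
        exact hg0 x
    exact h1.trans (lamR_le_measure Λ hΛ (hSclosed j))
  have hh0 : Λ (h 0) ≤ Λ 1 := lin_mono hΛ (fun x => min_le_right _ _)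
  -- integral lower bound
  have hfint : Integrable (fun x => f x) μ :=
    f.continuous.integrable_of_hasCompactSupport (HasCompactSupport.of_compactSpace _)
  set g : K → ℝ := fun x => ∑ i ∈ Finset.range m, (S (i + 1)).indicator (fun _ => δ) x
    with hgdef
  have hgint : Integrable g μ :=
    integrable_finset_sum _ (fun i _ =>
      (integrable_const δ).indicator (hSclosed (i + 1)).measurableSet)
  have hgle : ∀ x, g x ≤ f x := by
    intro x
    classical
    set k := ⌊f x / δ⌋₊ with hkdef
    have hsub : (Finset.range m).filter (fun i => x ∈ S (i + 1)) ⊆ Finset.range k := by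
      intro i hi
      rw [Finset.mem_filter] at hi
      have hx : ((i : ℝ) + 1) * δ ≤ f x := by
        have h2 := hi.2
        rw [hSdef] at h2
        simp only [Set.mem_setOf_eq, Nat.cast_add, Nat.cast_one] at h2
        convert h2 using 2
      have hle : ((i : ℝ) + 1) ≤ f x / δ := by rw [le_div_iff₀ hδ]; linarith
      have : (i + 1 : ℕ) ≤ k := Nat.le_floor (by push_cast; linarith)
      exact Finset.mem_range.2 this
    have hcard : (((Finset.range m).filter (fun i => x ∈ S (i + 1))).card : ℝ) ≤ (k : ℝ) := by
      exact_mod_cast le_trans (Finset.card_le_card hsub) (le_of_eq (Finset.card_range k))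
    have hsum : g x = ((((Finset.range m).filter (fun i => x ∈ S (i + 1))).card : ℝ)) * δ := by
      rw [hgdef]
      simp only [Set.indicator_apply]
      rw [← Finset.sum_filter, Finset.sum_const, nsmul_eq_mul]
    have hkf : (k : ℝ) * δ ≤ f x := by
      have := Nat.floor_le (div_nonneg (hf x) hδ.le)
      rw [← hkdef] at this
      rw [← div_mul_cancel₀ (f x) hδ.ne']
      exact mul_le_mul_of_nonneg_right this hδ.le
    rw [hsum]
    exact le_trans (mul_le_mul_of_nonneg_right hcard hδ.le) hkf
  have hgint' : ∫ x, g x ∂μ = ∑ i ∈ Finset.range m, (μ (S (i + 1))).toReal * δ := by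
    rw [hgdef]
    rw [integral_finset_sum _ (fun i _ =>
      (integrable_const δ).indicator (hSclosed (i + 1)).measurableSet)]
    refine Finset.sum_congr rfl (fun i _ => ?_)
    rw [integral_indicator_const δ (hSclosed (i + 1)).measurableSet, smul_eq_mul, measureReal_def]
  have hmono : ∫ x, g x ∂μ ≤ ∫ x, f x ∂μ := integral_mono hgint hfint hgle
  have hδΛ1 : δ * Λ 1 ≤ ε := by
    rw [hδdef]
    rw [div_mul_eq_mul_div, div_le_iff₀ (by linarith : (0:ℝ) < Λ 1 + 1)]
    nlinarith
  calc Λ f = δ * ((∑ i ∈ Finset.range m, Λ (h (i + 1))) + Λ (h 0)) := hΛf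
    _ ≤ δ * ((∑ i ∈ Finset.range m, (μ (S (i + 1))).toReal) + Λ 1) := by
        refine mul_le_mul_of_nonneg_left (add_le_add ?_ hh0) hδ.le
        exact Finset.sum_le_sum (fun i _ => hlayer (i + 1) (Nat.le_add_left 1 i))
    _ = (∑ i ∈ Finset.range m, (μ (S (i + 1))).toReal * δ) + δ * Λ 1 := by
        rw [mul_add, Finset.mul_sum]
        congr 1
        exact Finset.sum_congr rfl (fun i _ => mul_comm _ _)
    _ ≤ ∫ x, f x ∂μ + ε := by
        rw [← hgint']
        exact add_le_add hmono hδΛ1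

end MiniRMK
end MiniRMKSection

section Aux

variable (X) in
lemma isCompact_dualBall : IsCompact (dualBall X) := by
  have h := WeakDual.isCompact_closedBall (0 : StrongDual ℝ X) 1
  have : dualBall X = ⇑WeakDual.toStrongDual ⁻¹' Metric.closedBall 0 1 := by
    ext φ
    simp only [dualBall, Set.mem_setOf_eq, Set.mem_preimage, Metric.mem_closedBall,
      dist_zero_right]
    constructor
    · intro hφ
      exact ContinuousLinearMap.opNorm_le_bound _ zero_le_one (fun x => by
        simpa using hφ x)
    · intro hφ x
      calc ‖φ x‖ ≤ ‖WeakDual.toStrongDual φ‖ * ‖x‖ := ContinuousLinearMap.le_opNorm _ x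
        _ ≤ 1 * ‖x‖ := mul_le_mul_of_nonneg_right hφ (norm_nonneg x)
        _ = ‖x‖ := one_mul _
  rw [this]
  exact h

instance : CompactSpace (dualBall X) :=
  isCompact_iff_compactSpace.mp (isCompact_dualBall X)

instance : Nonempty (dualBall X) :=
  ⟨⟨0, fun x => by rw [show ((0 : WeakDual ℝ X) x) = 0 from rfl, norm_zero]; exact norm_nonneg x⟩⟩

lemma norm_rpow_smul {p : ℝ} (hp : 1 ≤ p) {W : Type*} [SeminormedAddCommGroup W]
    [NormedSpace ℝ W] {c : ℝ} (hc : 0 ≤ c) (w : W) :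
    ‖c ^ (1 / p) • w‖ ^ p = c * ‖w‖ ^ p := by
  have hp0 : p ≠ 0 := by positivity
  rw [norm_smul, Real.norm_eq_abs, abs_of_nonneg (Real.rpow_nonneg hc _),
    Real.mul_rpow (Real.rpow_nonneg hc _) (norm_nonneg w), ← Real.rpow_mul hc,
    one_div, inv_mul_cancel₀ hp0, Real.rpow_one]

variable (X) in
/-- Continuity of `φ ↦ ‖φ x‖ ^ p` on the dual ball. -/
lemma continuous_eval_rpow (p : ℝ) (hp : 1 ≤ p) (x : X) :
    Continuous fun φ : dualBall X => ‖(φ : WeakDual ℝ X) x‖ ^ p := by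
  have h1 : Continuous fun φ : dualBall X => (φ : WeakDual ℝ X) x :=
    (WeakDual.eval_continuous x).comp continuous_subtype_val
  exact (h1.norm).rpow_const (fun φ => Or.inr (by positivity))

end Aux

theorem stmt1 (p : ℝ) (hp : 1 ≤ p) (M : Set (X →L[ℝ] Y)) (C : ℝ) (hC : 0 ≤ C)
    (h : ∀ (m : ℕ) (T : Fin m → X →L[ℝ] Y) (x : Fin m → X), (∀ i, T i ∈ M) →
      (∑ i, ‖T i (x i)‖ ^ p) ^ (1 / p) ≤
        C * ⨆ φ : dualBall X, (∑ i, ‖(φ : WeakDual ℝ X) (x i)‖ ^ p) ^ (1 / p)) :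
    ∃ μ : Measure (dualBall X), IsFiniteMeasure μ ∧
      μ Set.univ ≤ ENNReal.ofReal (C ^ p) ∧ UniformlyDominatedBy p M μ := by
  classical
  have hp0 : (0 : ℝ) < p := lt_of_lt_of_le one_pos hp
  -- the convex cone S
  set S : Set C(dualBall X, ℝ) := {g | ∃ (m : ℕ) (T : Fin m → X →L[ℝ] Y) (xs : Fin m → X),
    (∀ i, T i ∈ M) ∧ ∀ φ : dualBall X,
      g φ = ∑ i, (‖T i (xs i)‖ ^ p - C ^ p * ‖(φ : WeakDual ℝ X) (xs i)‖ ^ p)} with hSdef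
  have zero_mem_S : (0 : C(dualBall X, ℝ)) ∈ S :=
    ⟨0, Fin.elim0, Fin.elim0, fun i => i.elim0, fun φ => by simp⟩
  have add_mem_S : ∀ g₁ ∈ S, ∀ g₂ ∈ S, g₁ + g₂ ∈ S := by
    rintro g₁ ⟨m₁, T₁, x₁, hT₁, he₁⟩ g₂ ⟨m₂, T₂, x₂, hT₂, he₂⟩
    refine ⟨m₁ + m₂, Fin.append T₁ T₂, Fin.append x₁ x₂, ?_, fun φ => ?_⟩
    · intro i
      refine Fin.addCases (fun j => ?_) (fun j => ?_) i
      · rw [Fin.append_left]; exact hT₁ j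
      · rw [Fin.append_right]; exact hT₂ j
    · rw [Fin.sum_univ_add]
      simp only [Fin.append_left, Fin.append_right]
      rw [ContinuousMap.add_apply, he₁ φ, he₂ φ]
  have smul_mem_S : ∀ (c : ℝ), 0 ≤ c → ∀ g ∈ S, c • g ∈ S := by
    rintro c hc g ⟨m, T, xs, hT, he⟩
    refine ⟨m, T, fun i => c ^ (1 / p) • xs i, hT, fun φ => ?_⟩
    have key : ∀ i, ‖T i (c ^ (1 / p) • xs i)‖ ^ p -
        C ^ p * ‖(φ : WeakDual ℝ X) (c ^ (1 / p) • xs i)‖ ^ p =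
        c * (‖T i (xs i)‖ ^ p - C ^ p * ‖(φ : WeakDual ℝ X) (xs i)‖ ^ p) := by
      intro i
      rw [_root_.map_smul, _root_.map_smul, norm_rpow_smul hp hc, norm_rpow_smul hp hc]
      ring
    rw [ContinuousMap.smul_apply, he φ, smul_eq_mul, Finset.mul_sum]
    exact Finset.sum_congr rfl (fun i _ => (key i).symm)
  have hSconvex : Convex ℝ S := by
    intro g₁ hg₁ g₂ hg₂ a b ha hb hab
    exact add_mem_S _ (smul_mem_S a ha g₁ hg₁) _ (smul_mem_S b hb g₂ hg₂)
  -- the open convex cone of strictly positive functions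
  set Pos : Set C(dualBall X, ℝ) := {g | ∀ φ, 0 < g φ} with hPosdef
  have hPosOpen : IsOpen Pos := by
    rw [Metric.isOpen_iff]
    intro g hg
    obtain ⟨φ₀, hφ₀⟩ := g.continuous.exists_forall_le (by rw [Filter.cocompact_eq_bot]; exact Filter.tendsto_bot)
    refine ⟨g φ₀, hg φ₀, fun g' hg' φ => ?_⟩
    have h1 : dist (g' φ) (g φ) ≤ dist g' g := ContinuousMap.dist_apply_le_dist φ
    have h2 : |g' φ - g φ| ≤ dist g' g := by rwa [Real.dist_eq] at h1
    have := hφ₀ φ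
    have := hg φ₀
    rw [Metric.mem_ball] at hg'
    have := abs_le.1 h2
    linarith [this.1]
  have hPosConvex : Convex ℝ Pos := by
    intro g₁ hg₁ g₂ hg₂ a b ha hb hab φ
    rw [ContinuousMap.add_apply, ContinuousMap.smul_apply, ContinuousMap.smul_apply,
      smul_eq_mul, smul_eq_mul]
    rcases eq_or_lt_of_le ha with ha' | ha'
    · have hb1 : b = 1 := by linarith
      rw [← ha', hb1]; simpa using hg₂ φ
    · have h1 : 0 < a * g₁ φ := mul_pos ha' (hg₁ φ)
      have h2 : 0 ≤ b * g₂ φ := mul_nonneg hb (hg₂ φ).le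
      linarith
  -- disjointness via the summing hypothesis
  have hdisj : Disjoint Pos S := by
    rw [Set.disjoint_left]
    rintro g hgPos ⟨m, T, xs, hT, he⟩
    -- maximize F over the compact ball
    have hFcont : Continuous fun φ : dualBall X => ∑ i, ‖(φ : WeakDual ℝ X) (xs i)‖ ^ p :=
      continuous_finset_sum _ (fun i _ => continuous_eval_rpow X p hp (xs i))
    obtain ⟨φ₀, hφ₀⟩ := hFcont.exists_forall_ge (by rw [Filter.cocompact_eq_bot]; exact Filter.tendsto_bot)
    set F : dualBall X → ℝ := fun φ => ∑ i, ‖(φ : WeakDual ℝ X) (xs i)‖ ^ p with hF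
    have hFnonneg : ∀ φ, 0 ≤ F φ := fun φ =>
      Finset.sum_nonneg (fun i _ => Real.rpow_nonneg (norm_nonneg _) _)
    have hsup : (⨆ φ : dualBall X, (F φ) ^ (1 / p)) = (F φ₀) ^ (1 / p) := by
      refine le_antisymm (ciSup_le (fun φ => Real.rpow_le_rpow (hFnonneg φ) (hφ₀ φ)
        (by positivity))) ?_
      refine le_ciSup (f := fun φ : dualBall X => (F φ) ^ (1 / p)) ⟨(F φ₀) ^ (1 / p), ?_⟩ φ₀
      rintro r ⟨φ, rfl⟩
      exact Real.rpow_le_rpow (hFnonneg φ) (hφ₀ φ) (by positivity)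
    have hkey := h m T xs hT
    rw [hsup] at hkey
    set a : ℝ := ∑ i, ‖T i (xs i)‖ ^ p with ha
    have hanonneg : 0 ≤ a :=
      Finset.sum_nonneg (fun i _ => Real.rpow_nonneg (norm_nonneg _) _)
    have hab : a ≤ C ^ p * F φ₀ := by
      have h1 : (a ^ (1 / p)) ^ p ≤ (C * (F φ₀) ^ (1 / p)) ^ p :=
        Real.rpow_le_rpow (Real.rpow_nonneg hanonneg _) hkey hp0.le
      have h2 : (a ^ (1 / p)) ^ p = a := by
        rw [← Real.rpow_mul hanonneg, one_div, inv_mul_cancel₀ hp0.ne', Real.rpow_one]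
      have h3 : (C * (F φ₀) ^ (1 / p)) ^ p = C ^ p * F φ₀ := by
        rw [Real.mul_rpow hC (Real.rpow_nonneg (hFnonneg φ₀) _),
          ← Real.rpow_mul (hFnonneg φ₀), one_div, inv_mul_cancel₀ hp0.ne', Real.rpow_one]
      rw [h2, h3] at h1
      exact h1
    have hgφ₀ : g φ₀ ≤ 0 := by
      rw [he φ₀, Finset.sum_sub_distrib, ← Finset.mul_sum]
      have : (∑ i, ‖(φ₀ : WeakDual ℝ X) (xs i)‖ ^ p) = F φ₀ := rfl
      rw [this, ← ha]
      linarith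
    exact absurd (hgPos φ₀) (not_lt.2 hgφ₀)
  -- Hahn-Banach separation
  obtain ⟨L, u, hL1, hL2⟩ := geometric_hahn_banach_open hPosConvex hPosOpen hSconvex hdisj
  have hu0 : u ≤ 0 := by simpa using hL2 0 zero_mem_S
  have hone_mem : (1 : C(dualBall X, ℝ)) ∈ Pos := fun φ => by
    rw [ContinuousMap.one_apply]; exact one_pos
  have hL1neg : L 1 < 0 := lt_of_lt_of_le (hL1 1 hone_mem) hu0
  have hLS : ∀ g ∈ S, 0 ≤ L g := by
    intro g hg
    by_contra hneg
    push_neg at hneg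
    set c : ℝ := (u - 1) / L g with hc
    have hcpos : 0 < c := div_pos_of_neg_of_neg (by linarith) hneg
    have := hL2 (c • g) (smul_mem_S c hcpos.le g hg)
    rw [_root_.map_smul, smul_eq_mul, hc, div_mul_cancel₀ _ (ne_of_lt hneg)] at this
    linarith
  -- the positive functional
  set Λ : C(dualBall X, ℝ) →ₗ[ℝ] ℝ := -(L.toLinearMap) with hΛdef
  have hΛapp : ∀ f, Λ f = -(L f) := fun f => rfl
  have hΛpos : ∀ f : C(dualBall X, ℝ), (∀ x, 0 ≤ f x) → 0 ≤ Λ f := by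
    intro f hf
    rw [hΛapp, neg_nonneg]
    refine le_of_forall_pos_le_add (fun ε hε => ?_)
    set ε' : ℝ := ε / (-(L 1)) with hε'
    have hε'pos : 0 < ε' := div_pos hε (by linarith)
    have hmem : f + ε' • 1 ∈ Pos := by
      intro φ
      rw [ContinuousMap.add_apply, ContinuousMap.smul_apply, ContinuousMap.one_apply,
        smul_eq_mul, mul_one]
      linarith [hf φ]
    have := hL1 _ hmem
    rw [map_add, _root_.map_smul, smul_eq_mul] at this
    have hcalc : ε' * (-(L 1)) = ε := div_mul_cancel₀ _ (by linarith : -(L 1) ≠ 0)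
    have : L f < u - ε' * L 1 := by linarith
    have h2 : -(ε' * L 1) = ε := by rw [← hcalc]; ring
    linarith
  have hΛ1pos : 0 < Λ 1 := by rw [hΛapp]; linarith
  -- apply the Riesz construction
  set μ₀ : Measure (dualBall X) := MiniRMK.rieszMeasure Λ hΛpos with hμ₀
  have hμ₀univ : μ₀ Set.univ ≤ ENNReal.ofReal (Λ 1) := MiniRMK.rieszMeasure_univ_le Λ hΛpos
  have hμ₀fin : IsFiniteMeasure μ₀ := by
    constructor
    exact lt_of_le_of_lt hμ₀univ ENNReal.ofReal_lt_top
  have hCp : (0 : ℝ) ≤ C ^ p := Real.rpow_nonneg hC p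
  have hratio : (0 : ℝ) ≤ C ^ p / Λ 1 := div_nonneg hCp hΛ1pos.le
  refine ⟨ENNReal.ofReal (C ^ p / Λ 1) • μ₀, ?_, ?_, ?_⟩
  · constructor
    rw [Measure.smul_apply, smul_eq_mul]
    exact ENNReal.mul_lt_top ENNReal.ofReal_lt_top (measure_lt_top μ₀ _)
  · rw [Measure.smul_apply, smul_eq_mul]
    calc ENNReal.ofReal (C ^ p / Λ 1) * μ₀ Set.univ
        ≤ ENNReal.ofReal (C ^ p / Λ 1) * ENNReal.ofReal (Λ 1) :=
          mul_le_mul_right hμ₀univ _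
      _ = ENNReal.ofReal (C ^ p / Λ 1 * Λ 1) := (ENNReal.ofReal_mul hratio).symm
      _ = ENNReal.ofReal (C ^ p) := by rw [div_mul_cancel₀ _ hΛ1pos.ne']
  · intro T hT x
    set g1 : C(dualBall X, ℝ) := ⟨fun φ => ‖(φ : WeakDual ℝ X) x‖ ^ p,
      continuous_eval_rpow X p hp x⟩ with hg1def
    have hg1nonneg : ∀ φ, 0 ≤ g1 φ := fun φ => Real.rpow_nonneg (norm_nonneg _) _
    set gel : C(dualBall X, ℝ) := ‖T x‖ ^ p • (1 : C(dualBall X, ℝ)) - C ^ p • g1 with hgel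
    have hgelS : gel ∈ S := by
      refine ⟨1, fun _ => T, fun _ => x, fun _ => hT, fun φ => ?_⟩
      rw [Fin.sum_univ_one]
      simp [hgel, hg1def]
    have hΛgel : Λ gel ≤ 0 := by
      rw [hΛapp, neg_nonpos]
      exact hLS gel hgelS
    have hexpand : Λ gel = ‖T x‖ ^ p * Λ 1 - C ^ p * Λ g1 := by
      rw [hgel, map_sub, _root_.map_smul, _root_.map_smul, smul_eq_mul, smul_eq_mul]
    have hmain : ‖T x‖ ^ p * Λ 1 ≤ C ^ p * Λ g1 := by linarith [hexpand ▸ hΛgel]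
    have hΛg1int : Λ g1 ≤ ∫ φ, g1 φ ∂μ₀ := MiniRMK.le_integral Λ hΛpos g1 hg1nonneg
    have h5 : ‖T x‖ ^ p ≤ (C ^ p / Λ 1) * Λ g1 := by
      rw [div_mul_eq_mul_div, le_div_iff₀ hΛ1pos]
      linarith
    have h6 : (C ^ p / Λ 1) * Λ g1 ≤ (C ^ p / Λ 1) * ∫ φ, g1 φ ∂μ₀ :=
      mul_le_mul_of_nonneg_left hΛg1int hratio
    have h7 : ∫ φ : dualBall X, ‖(φ : WeakDual ℝ X) x‖ ^ p
        ∂(ENNReal.ofReal (C ^ p / Λ 1) • μ₀) = (C ^ p / Λ 1) * ∫ φ, g1 φ ∂μ₀ := by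
      rw [integral_smul_measure, ENNReal.toReal_ofReal hratio, smul_eq_mul]
      rfl
    rw [h7]
    linarith
end
end

section
/- Let Y be a Banach space with no finite cotype and let M ⊆ Π_p(X,Y). If M is uniformly dominated by a measure μ, then for every C > μ(B_{X*})^{1/p}, every finite family T₁,...,Tₙ ∈ M and x₁,...,xₙ ∈ X, there exists an absolutely p-summing operator T : X → Y with π_p(T) ≤ C and ‖Tᵢ(xᵢ)‖ ≤ ‖T(xᵢ)‖ for all i = 1,...,n. -/
open MeasureTheory

noncomputable section

variable {X : Type*} [NormedAddCommGroup X] [NormedSpace ℝ X] [CompleteSpace X]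
variable {Y : Type*} [NormedAddCommGroup Y] [NormedSpace ℝ Y] [CompleteSpace Y]

lemma integrable_eval_rpow (p : ℝ) (hp : 0 < p) (μ : Measure (dualBall X))
    [IsFiniteMeasure μ] (z : X) :
    Integrable (fun φ : dualBall X => ‖(φ : WeakDual ℝ X) z‖ ^ p) μ := by
  have hcont : Continuous fun φ : dualBall X => ‖(φ : WeakDual ℝ X) z‖ ^ p := by
    have h1 : Continuous fun φ : dualBall X => (φ : WeakDual ℝ X) z :=
      (WeakDual.eval_continuous z).comp continuous_subtype_val
    exact (h1.norm).rpow_const fun _ => Or.inr hp.le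
  refine (integrable_const (‖z‖ ^ p)).mono' hcont.aestronglyMeasurable ?_
  filter_upwards with φ
  rw [Real.norm_eq_abs, abs_of_nonneg (Real.rpow_nonneg (norm_nonneg _) _)]
  exact Real.rpow_le_rpow (norm_nonneg _) (φ.2 z) hp.le

theorem stmt4 (p : ℝ) (hp : 1 ≤ p)
    (hY : ∀ ε : ℝ, 0 < ε → ∀ n : ℕ, ∃ J : (Fin n → ℝ) →L[ℝ] Y,
      (∀ c, ‖c‖ ≤ ‖J c‖) ∧ ‖J‖ ≤ 1 + ε)
    (M : Set (X →L[ℝ] Y)) (hM : ∀ T ∈ M, AbsolutelySumming p T)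
    (μ : Measure (dualBall X)) [IsFiniteMeasure μ]
    (hdom : UniformlyDominatedBy p M μ) :
    ∀ C : ℝ, (μ Set.univ).toReal ^ (1 / p) < C →
      ∀ (n : ℕ) (T : Fin n → X →L[ℝ] Y) (x : Fin n → X), (∀ i, T i ∈ M) →
        ∃ S : X →L[ℝ] Y, AbsolutelySumming p S ∧ piNorm p S ≤ C ∧
          ∀ i, ‖T i (x i)‖ ≤ ‖S (x i)‖ := by
  intro C hC n T x hTM
  have hp0 : (0:ℝ) < p := lt_of_lt_of_le one_pos hp
  set a : ℝ := (μ Set.univ).toReal ^ (1 / p) with ha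
  have ha0 : 0 ≤ a := Real.rpow_nonneg ENNReal.toReal_nonneg _
  have hC0 : 0 ≤ C := le_of_lt (lt_of_le_of_lt ha0 hC)
  set ε : ℝ := (C - a) / (a + 1) with hε
  have hεpos : 0 < ε := div_pos (sub_pos.mpr hC) (by linarith)
  have hkey : (1 + ε) * a ≤ C := by
    have h1 : ε * (a + 1) = C - a := div_mul_cancel₀ _ (by linarith)
    nlinarith [hεpos.le, ha0]
  obtain ⟨J, hJlow, hJnorm⟩ := hY ε hεpos n
  choose f hf1 hf2 using fun i => exists_dual_vector'' ℝ (T i (x i))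
  set u : X →L[ℝ] (Fin n → ℝ) :=
    ContinuousLinearMap.pi (fun i => (f i).comp (T i)) with hu
  set S : X →L[ℝ] Y := J.comp u with hS
  -- pointwise domination of u
  have hudom : ∀ z : X, ‖u z‖ ^ p ≤ ∫ φ : dualBall X, ‖(φ : WeakDual ℝ X) z‖ ^ p ∂μ := by
    intro z
    set I : ℝ := ∫ φ : dualBall X, ‖(φ : WeakDual ℝ X) z‖ ^ p ∂μ with hI
    have hI0 : 0 ≤ I := integral_nonneg fun φ => Real.rpow_nonneg (norm_nonneg _) _
    have hub : ‖u z‖ ≤ I ^ (1 / p) := by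
      refine pi_norm_le_iff_of_nonneg (Real.rpow_nonneg hI0 _) |>.mpr fun i => ?_
      have h1 : ‖(u z) i‖ ≤ ‖T i z‖ := by
        calc ‖(f i) (T i z)‖ ≤ ‖f i‖ * ‖T i z‖ := (f i).le_opNorm _
        _ ≤ 1 * ‖T i z‖ := mul_le_mul_of_nonneg_right (hf1 i) (norm_nonneg _)
        _ = ‖T i z‖ := one_mul _
      refine h1.trans ?_
      have h2 : ‖T i z‖ ^ p ≤ I := hdom (T i) (hTM i) z
      have h3 : (‖T i z‖ ^ p) ^ (1 / p) ≤ I ^ (1 / p) :=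
        Real.rpow_le_rpow (Real.rpow_nonneg (norm_nonneg _) _) h2 (by positivity)
      rwa [← Real.rpow_mul (norm_nonneg _), mul_one_div_cancel hp0.ne',
        Real.rpow_one] at h3
    have h4 : ‖u z‖ ^ p ≤ (I ^ (1 / p)) ^ p :=
      Real.rpow_le_rpow (norm_nonneg _) hub hp0.le
    rwa [← Real.rpow_mul hI0, one_div_mul_cancel hp0.ne', Real.rpow_one] at h4
  have hSW : SummingWith p S C := by
    intro m y
    set s : ℝ := ⨆ φ : dualBall X,
      (∑ j, ‖(φ : WeakDual ℝ X) (y j)‖ ^ p) ^ (1 / p) with hs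
    have hs0 : 0 ≤ s :=
      Real.iSup_nonneg fun φ => Real.rpow_nonneg (Finset.sum_nonneg fun j _ =>
        Real.rpow_nonneg (norm_nonneg _) _) _
    have hbdd : BddAbove (Set.range fun φ : dualBall X =>
        (∑ j, ‖(φ : WeakDual ℝ X) (y j)‖ ^ p) ^ (1 / p)) := by
      refine ⟨(∑ j, ‖y j‖ ^ p) ^ (1 / p), ?_⟩
      rintro _ ⟨φ, rfl⟩
      refine Real.rpow_le_rpow (Finset.sum_nonneg fun j _ =>
        Real.rpow_nonneg (norm_nonneg _) _) ?_ (by positivity)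
      exact Finset.sum_le_sum fun j _ =>
        Real.rpow_le_rpow (norm_nonneg _) (φ.2 (y j)) hp0.le
    have hφs : ∀ φ : dualBall X, ∑ j, ‖(φ : WeakDual ℝ X) (y j)‖ ^ p ≤ s ^ p := by
      intro φ
      have h1 : (∑ j, ‖(φ : WeakDual ℝ X) (y j)‖ ^ p) ^ (1 / p) ≤ s := le_ciSup hbdd φ
      have h2 := Real.rpow_le_rpow (Real.rpow_nonneg (Finset.sum_nonneg fun j _ =>
        Real.rpow_nonneg (norm_nonneg _) _) _) h1 hp0.le
      rwa [← Real.rpow_mul (Finset.sum_nonneg fun j _ =>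
        Real.rpow_nonneg (norm_nonneg _) _), one_div_mul_cancel hp0.ne',
        Real.rpow_one] at h2
    -- integral bound
    have hint : ∀ j : Fin m, Integrable
        (fun φ : dualBall X => ‖(φ : WeakDual ℝ X) (y j)‖ ^ p) μ :=
      fun j => integrable_eval_rpow p hp0 μ (y j)
    have hI : ∑ j, ∫ φ : dualBall X, ‖(φ : WeakDual ℝ X) (y j)‖ ^ p ∂μ ≤
        (μ Set.univ).toReal * s ^ p := by
      rw [← integral_finset_sum _ fun j _ => hint j]
      calc (∫ φ : dualBall X, ∑ j, ‖(φ : WeakDual ℝ X) (y j)‖ ^ p ∂μ)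
          ≤ ∫ _ : dualBall X, s ^ p ∂μ :=
            integral_mono (integrable_finset_sum _ fun j _ => hint j)
              (integrable_const _) hφs
        _ = (μ Set.univ).toReal * s ^ p := by rw [integral_const, smul_eq_mul, measureReal_def]
    have hsum : ∑ j, ‖S (y j)‖ ^ p ≤ (1 + ε) ^ p * ((μ Set.univ).toReal * s ^ p) := by
      have hstep : ∀ j, ‖S (y j)‖ ^ p ≤ (1 + ε) ^ p * ‖u (y j)‖ ^ p := by
        intro j
        have h1 : ‖S (y j)‖ ≤ (1 + ε) * ‖u (y j)‖ := by
          calc ‖J (u (y j))‖ ≤ ‖J‖ * ‖u (y j)‖ := J.le_opNorm _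
          _ ≤ (1 + ε) * ‖u (y j)‖ := mul_le_mul_of_nonneg_right hJnorm (norm_nonneg _)
        calc ‖S (y j)‖ ^ p ≤ ((1 + ε) * ‖u (y j)‖) ^ p :=
              Real.rpow_le_rpow (norm_nonneg _) h1 hp0.le
        _ = (1 + ε) ^ p * ‖u (y j)‖ ^ p :=
              Real.mul_rpow (by linarith) (norm_nonneg _)
      calc ∑ j, ‖S (y j)‖ ^ p ≤ ∑ j, (1 + ε) ^ p * ‖u (y j)‖ ^ p :=
            Finset.sum_le_sum fun j _ => hstep j
      _ = (1 + ε) ^ p * ∑ j, ‖u (y j)‖ ^ p := by rw [Finset.mul_sum]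
      _ ≤ (1 + ε) ^ p * ∑ j, ∫ φ : dualBall X, ‖(φ : WeakDual ℝ X) (y j)‖ ^ p ∂μ := by
            refine mul_le_mul_of_nonneg_left
              (Finset.sum_le_sum fun j _ => hudom (y j))
              (Real.rpow_nonneg (by linarith) _)
      _ ≤ (1 + ε) ^ p * ((μ Set.univ).toReal * s ^ p) :=
            mul_le_mul_of_nonneg_left hI (Real.rpow_nonneg (by linarith) _)
    have hfin : (∑ j, ‖S (y j)‖ ^ p) ^ (1 / p) ≤
        ((1 + ε) ^ p * ((μ Set.univ).toReal * s ^ p)) ^ (1 / p) :=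
      Real.rpow_le_rpow (Finset.sum_nonneg fun j _ =>
        Real.rpow_nonneg (norm_nonneg _) _) hsum (by positivity)
    have hrw : ((1 + ε) ^ p * ((μ Set.univ).toReal * s ^ p)) ^ (1 / p) =
        (1 + ε) * (a * s) := by
      rw [Real.mul_rpow (Real.rpow_nonneg (by linarith) _)
          (mul_nonneg ENNReal.toReal_nonneg (Real.rpow_nonneg hs0 _)),
        Real.mul_rpow ENNReal.toReal_nonneg (Real.rpow_nonneg hs0 _),
        ← Real.rpow_mul (by linarith : (0:ℝ) ≤ 1 + ε),
        mul_one_div_cancel hp0.ne', Real.rpow_one,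
        ← Real.rpow_mul hs0, mul_one_div_cancel hp0.ne', Real.rpow_one, ha]
    rw [hrw] at hfin
    refine hfin.trans ?_
    calc (1 + ε) * (a * s) = ((1 + ε) * a) * s := by ring
    _ ≤ C * s := mul_le_mul_of_nonneg_right hkey hs0
  refine ⟨S, ⟨C, hC0, hSW⟩, ?_, ?_⟩
  · exact csInf_le ⟨0, fun b hb => hb.1⟩ ⟨hC0, hSW⟩
  · intro i
    have h1 : ‖(u (x i)) i‖ ≤ ‖u (x i)‖ := norm_le_pi_norm _ i
    have h2 : (u (x i)) i = ‖T i (x i)‖ := hf2 i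
    calc ‖T i (x i)‖ = ‖(u (x i)) i‖ := by rw [h2, Real.norm_eq_abs, abs_of_nonneg (norm_nonneg _)]
    _ ≤ ‖u (x i)‖ := h1
    _ ≤ ‖J (u (x i))‖ := hJlow _
end
end

section
/- An arbitrary (not necessarily linear or continuous) map u : X → Y that is absolutely p-summing at 0, i.e., satisfies (∑ⱼ ‖u(xⱼ) − u(0)‖^p)^{1/p} ≤ C sup_{φ ∈ B_{X*}} (∑ⱼ |φ(xⱼ)|^p)^{1/p} for all finite families x₁,...,xₘ ∈ X, admits a domination: there is a Borel probability measure μ on (B_{X*}, weak-star) with ‖u(x) − u(0)‖ ≤ C (∫_{B_{X*}} |φ(x)|^p dμ(φ))^{1/p} for all x ∈ X. -/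
open MeasureTheory

noncomputable section

variable {X : Type*} [NormedAddCommGroup X] [NormedSpace ℝ X] [CompleteSpace X]
variable {Y : Type*} [NormedAddCommGroup Y] [NormedSpace ℝ Y] [CompleteSpace Y]

namespace PietschAux

variable {α : Type*} [TopologicalSpace α] [CompactSpace α] [T2Space α]
  [MeasurableSpace α] [BorelSpace α] [Nonempty α]

variable {Λ : C(α, ℝ) → ℝ}



/-- The set of values of `Λ` on admissible functions for a compact set `Kc`. -/
def lamSet (Λ : C(α, ℝ) → ℝ) (Kc : Set α) : Set ℝ :=
  Λ '' {f : C(α, ℝ) | 0 ≤ f ∧ ∀ z ∈ Kc, 1 ≤ f z}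

variable {Λ : C(α, ℝ) → ℝ}

theorem lamSet_nonempty (Kc : Set α) : (lamSet Λ Kc).Nonempty :=
  ⟨Λ 1, ⟨1, ⟨by intro z; simp, fun z _ => by simp⟩, rfl⟩⟩

theorem lamSet_bddBelow (hpos : ∀ f : C(α, ℝ), 0 ≤ f → 0 ≤ Λ f) (Kc : Set α) :
    BddBelow (lamSet Λ Kc) := by
  refine ⟨0, ?_⟩
  rintro r ⟨f, ⟨hf0, -⟩, rfl⟩
  exact hpos f hf0

def lam (Λ : C(α, ℝ) → ℝ) (Kc : Set α) : ℝ := sInf (lamSet Λ Kc)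

theorem lam_nonneg (hpos : ∀ f : C(α, ℝ), 0 ≤ f → 0 ≤ Λ f) (Kc : Set α) :
    0 ≤ lam Λ Kc :=
  le_csInf (lamSet_nonempty Kc) (by rintro r ⟨f, ⟨hf0, -⟩, rfl⟩; exact hpos f hf0)

theorem lam_le (f : C(α, ℝ)) (hf0 : 0 ≤ f) {Kc : Set α} (hf1 : ∀ z ∈ Kc, 1 ≤ f z)
    (hpos : ∀ f : C(α, ℝ), 0 ≤ f → 0 ≤ Λ f) : lam Λ Kc ≤ Λ f :=
  csInf_le (lamSet_bddBelow hpos Kc) ⟨f, ⟨hf0, hf1⟩, rfl⟩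

theorem exists_admissible (hpos : ∀ f : C(α, ℝ), 0 ≤ f → 0 ≤ Λ f) (Kc : Set α)
    {ε : ℝ} (hε : 0 < ε) :
    ∃ f : C(α, ℝ), 0 ≤ f ∧ (∀ z ∈ Kc, 1 ≤ f z) ∧ Λ f < lam Λ Kc + ε := by
  obtain ⟨r, hr, hrlt⟩ := csInf_lt_iff (lamSet_bddBelow hpos Kc) (lamSet_nonempty Kc) |>.mp
    (lt_add_of_pos_right (lam Λ Kc) hε)
  obtain ⟨f, ⟨hf0, hf1⟩, rfl⟩ := hr
  exact ⟨f, hf0, hf1, hrlt⟩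

section content
set_option linter.unusedSectionVars false

variable (hpos : ∀ f : C(α, ℝ), 0 ≤ f → 0 ≤ Λ f)
  (hadd : ∀ f g : C(α, ℝ), Λ (f + g) = Λ f + Λ g)

include hpos hadd in
theorem lam_sup_le (K₁ K₂ : Set α) : lam Λ (K₁ ∪ K₂) ≤ lam Λ K₁ + lam Λ K₂ := by
  have h1 : ∀ ε > (0:ℝ), lam Λ (K₁ ∪ K₂) ≤ lam Λ K₁ + lam Λ K₂ + ε := by
    intro ε hε
    obtain ⟨f₁, hf₁0, hf₁1, hf₁⟩ := exists_admissible hpos K₁ (half_pos hε)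
    obtain ⟨f₂, hf₂0, hf₂1, hf₂⟩ := exists_admissible hpos K₂ (half_pos hε)
    have hle : lam Λ (K₁ ∪ K₂) ≤ Λ (f₁ + f₂) := by
      refine lam_le _ ?_ ?_ hpos
      · exact add_nonneg hf₁0 hf₂0
      · rintro z (hz | hz)
        · have := hf₂0 z; simp only [ContinuousMap.zero_apply] at this
          simpa using add_le_add (hf₁1 z hz) this
        · have := hf₁0 z; simp only [ContinuousMap.zero_apply] at this
          simpa using add_le_add this (hf₂1 z hz)
    rw [hadd] at hle
    linarith
  by_contra h
  push_neg at h
  have := h1 ((lam Λ (K₁ ∪ K₂) - (lam Λ K₁ + lam Λ K₂)) / 2) (by linarith)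
  linarith

include hpos hadd in
theorem lam_sup_disjoint (K₁ K₂ : Set α) (hd : Disjoint K₁ K₂)
    (hc₁ : IsClosed K₁) (hc₂ : IsClosed K₂) :
    lam Λ K₁ + lam Λ K₂ ≤ lam Λ (K₁ ∪ K₂) := by
  obtain ⟨w, hw0, hw1, hw01⟩ := exists_continuous_zero_one_of_isClosed hc₁ hc₂ hd
  refine le_csInf (lamSet_nonempty _) ?_
  rintro r ⟨g, ⟨hg0, hg1⟩, rfl⟩
  have hg0' : ∀ z, 0 ≤ g z := fun z => by simpa using hg0 z
  have key : Λ (g * (1 - w)) + Λ (g * w) = Λ g := by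
    rw [← hadd]; congr 1; ext z; simp; ring
  have h₁ : lam Λ K₁ ≤ Λ (g * (1 - w)) := by
    refine lam_le _ ?_ ?_ hpos
    · intro z
      simp only [ContinuousMap.zero_apply, ContinuousMap.mul_apply, ContinuousMap.sub_apply,
        ContinuousMap.one_apply]
      refine mul_nonneg (hg0' z) ?_
      simp only [ContinuousMap.sub_apply, ContinuousMap.one_apply]
      have := (hw01 z).2; linarith
    · intro z hz
      have : w z = 0 := hw0 hz
      have hgz : 1 ≤ g z := hg1 z (Or.inl hz)
      simp only [ContinuousMap.mul_apply, ContinuousMap.sub_apply, ContinuousMap.one_apply, this]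
      linarith
  have h₂ : lam Λ K₂ ≤ Λ (g * w) := by
    refine lam_le _ ?_ ?_ hpos
    · intro z
      simp only [ContinuousMap.zero_apply, ContinuousMap.mul_apply]
      exact mul_nonneg (hg0' z) (hw01 z).1
    · intro z hz
      have : w z = 1 := hw1 hz
      have hgz : 1 ≤ g z := hg1 z (Or.inr hz)
      simp only [ContinuousMap.mul_apply, this]
      linarith
  linarith

/-- The content associated to a positive normalized functional. -/
def rieszContent (Λ : C(α, ℝ) → ℝ) (hpos : ∀ f : C(α, ℝ), 0 ≤ f → 0 ≤ Λ f)
    (hadd : ∀ f g : C(α, ℝ), Λ (f + g) = Λ f + Λ g) : Content α where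
  toFun K := ⟨lam Λ K, lam_nonneg hpos K⟩
  mono' K₁ K₂ h := by
    refine NNReal.coe_le_coe.mp ?_
    exact csInf_le_csInf (lamSet_bddBelow hpos _) (lamSet_nonempty _)
      (Set.image_mono (fun f hf => ⟨hf.1, fun z hz => hf.2 z (h hz)⟩))
  sup_disjoint' K₁ K₂ hd h₁ h₂ := by
    refine NNReal.coe_inj.mp ?_
    push_cast
    exact le_antisymm (lam_sup_le hpos hadd _ _) (lam_sup_disjoint hpos hadd _ _ hd h₁ h₂)
  sup_le' K₁ K₂ := by
    refine NNReal.coe_le_coe.mp ?_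
    push_cast
    exact lam_sup_le hpos hadd _ _

end content

section measure
set_option linter.unusedSectionVars false

variable (hpos : ∀ f : C(α, ℝ), 0 ≤ f → 0 ≤ Λ f)
  (hadd : ∀ f g : C(α, ℝ), Λ (f + g) = Λ f + Λ g)
  (hone : Λ 1 = 1)

include hpos hadd in
theorem lam_mono_fn {f g : C(α, ℝ)} (h : f ≤ g) : Λ f ≤ Λ g := by
  have : Λ g = Λ f + Λ (g - f) := by rw [← hadd]; congr 1; ext z; simp
  have h2 : 0 ≤ Λ (g - f) := hpos _ (by intro z; simpa using (h z : f z ≤ g z))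
  linarith

include hpos hadd hone in
theorem lam_univ : lam Λ (Set.univ : Set α) = 1 := by
  refine le_antisymm ?_ ?_
  · have := lam_le (Λ := Λ) (Kc := Set.univ) 1 (by intro z; simp) (fun z _ => by simp) hpos
    rwa [hone] at this
  · refine le_csInf (lamSet_nonempty _) ?_
    rintro r ⟨f, ⟨hf0, hf1⟩, rfl⟩
    have : Λ 1 ≤ Λ f := lam_mono_fn hpos hadd (by intro z; simpa using hf1 z trivial)
    rwa [hone] at this

include hpos hadd in
theorem rieszContent_apply (K : TopologicalSpace.Compacts α) :
    (rieszContent Λ hpos hadd) K = ENNReal.ofReal (lam Λ (K : Set α)) := by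
  show (((rieszContent Λ hpos hadd).toFun K : NNReal) : ENNReal) = _
  rw [ENNReal.ofReal, Real.toNNReal_of_nonneg (lam_nonneg hpos _)]
  rfl

include hpos hadd hone in
theorem rieszMeasure_univ :
    (rieszContent Λ hpos hadd).measure Set.univ = 1 := by
  rw [Content.measure_apply _ MeasurableSet.univ,
    Content.outerMeasure_of_isOpen _ _ isOpen_univ]
  have h := Content.innerContent_of_isCompact (rieszContent Λ hpos hadd)
    (isCompact_univ (X := α)) isOpen_univ
  rw [show (⟨Set.univ, isOpen_univ⟩ : TopologicalSpace.Opens α) = ⊤ from rfl] at h ⊢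
  rw [h, rieszContent_apply hpos hadd]
  show ENNReal.ofReal (lam Λ (Set.univ : Set α)) = 1
  rw [lam_univ hpos hadd hone]
  norm_num

include hpos hadd hone in
theorem rieszMeasure_isProbability :
    IsProbabilityMeasure (rieszContent Λ hpos hadd).measure :=
  ⟨rieszMeasure_univ hpos hadd hone⟩

include hpos hadd in
theorem lam_le_measure (K : Set α) (hK : IsCompact K) :
    ENNReal.ofReal (lam Λ K) ≤ (rieszContent Λ hpos hadd).measure K := by
  rw [Content.measure_apply _ hK.isClosed.measurableSet]
  have := Content.le_outerMeasure_compacts (rieszContent Λ hpos hadd) ⟨K, hK⟩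
  refine le_trans (le_of_eq ?_) this
  rw [rieszContent_apply hpos hadd]
  rfl

end measure

section integral
set_option linter.unusedSectionVars false

variable (hpos : ∀ f : C(α, ℝ), 0 ≤ f → 0 ≤ Λ f)
  (hadd : ∀ f g : C(α, ℝ), Λ (f + g) = Λ f + Λ g)
  (hsmul : ∀ (c : ℝ) (f : C(α, ℝ)), Λ (c • f) = c * Λ f)
  (hone : Λ 1 = 1)

include hpos hadd hsmul hone in
theorem lam_fn_le_integral (f : C(α, ℝ)) (hf : 0 ≤ f) :
    Λ f ≤ ∫ z, f z ∂(rieszContent Λ hpos hadd).measure := by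
  set μ := (rieszContent Λ hpos hadd).measure with hμ
  haveI : IsProbabilityMeasure μ := rieszMeasure_isProbability hpos hadd hone
  have hf0' : ∀ z, (0:ℝ) ≤ f z := fun z => by simpa using hf z
  have hfint : Integrable (fun z => f z) μ :=
    f.continuous.integrable_of_hasCompactSupport (HasCompactSupport.of_compactSpace _)
  have key : ∀ n : ℕ, 0 < n → Λ f ≤ 2 * ((‖f‖ + 1) / n) + ∫ z, f z ∂μ := by
    intro n hn
    have hnR : (0:ℝ) < n := Nat.cast_pos.mpr hn
    set δ : ℝ := (‖f‖ + 1) / n with hδdef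
    have hδ : 0 < δ := div_pos (by positivity) hnR
    set Ks : Fin n → Set α := fun i => {z | δ * ((i:ℕ) + 1) ≤ f z} with hKs
    have hKc : ∀ i, IsCompact (Ks i) := fun i =>
      (isClosed_le continuous_const f.continuous).isCompact
    have hKm : ∀ i, MeasurableSet (Ks i) := fun i => (hKc i).isClosed.measurableSet
    have hgex : ∀ i : Fin n, ∃ g : C(α, ℝ), 0 ≤ g ∧ (∀ z ∈ Ks i, 1 ≤ g z) ∧
        Λ g < lam Λ (Ks i) + 1 / n := fun i =>
      exists_admissible hpos (Ks i) (by positivity)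
    choose g hg0 hg1 hgΛ using hgex
    -- counting
    set k : α → ℕ := fun z => ⌊f z / δ⌋₊ with hk
    have fact1 : ∀ z (i : Fin n), z ∈ Ks i ↔ (i:ℕ) + 1 ≤ k z := by
      intro z i
      rw [hk, Nat.le_floor_iff (div_nonneg (hf0' z) hδ.le)]
      rw [hKs]; simp only [Set.mem_setOf_eq]
      rw [le_div_iff₀ hδ]
      push_cast
      constructor <;> intro h <;> linarith
    have fact2 : ∀ z, k z < n := by
      intro z
      rw [hk, Nat.floor_lt (div_nonneg (hf0' z) hδ.le)]
      rw [div_lt_iff₀ hδ]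
      have h1 : f z ≤ ‖f‖ := (le_abs_self _).trans (f.norm_coe_le_norm z)
      have h2 : (n:ℝ) * δ = ‖f‖ + 1 := by
        rw [hδdef]; field_simp
      nlinarith
    have fact3 : ∀ z, (∑ i : Fin n, if z ∈ Ks i then (1:ℝ) else 0) = k z := by
      intro z
      have : ∀ i : Fin n, (if z ∈ Ks i then (1:ℝ) else 0)
          = (if (i:ℕ) < k z then (1:ℝ) else 0) := by
        intro i
        congr 1
        simp only [eq_iff_iff, fact1 z i, Nat.lt_iff_add_one_le]
      rw [Finset.sum_congr rfl (fun i _ => this i)]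
      rw [Fin.sum_univ_eq_sum_range (fun i => if i < k z then (1:ℝ) else 0) n]
      rw [Finset.sum_boole]
      have : Finset.filter (fun i => i < k z) (Finset.range n) = Finset.range (k z) := by
        ext a
        simp only [Finset.mem_filter, Finset.mem_range]
        have := fact2 z
        omega
      rw [this, Finset.card_range]
    have fact4 : ∀ z, f z ≤ δ + δ * k z := by
      intro z
      have h1 : f z / δ < k z + 1 := Nat.lt_floor_add_one _
      have h2 : f z < δ * (k z + 1) := by
        rw [← div_lt_iff₀' hδ]
        exact h1
      nlinarith
    have fact5 : ∀ z, δ * k z ≤ f z := by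
      intro z
      have h1 : (k z : ℝ) ≤ f z / δ := Nat.floor_le (div_nonneg (hf0' z) hδ.le)
      rw [← le_div_iff₀' hδ]
      exact h1
    -- step 1 : Λ f ≤ δ + ∑ δ Λ (g i)
    have step1 : Λ f ≤ δ + ∑ i : Fin n, δ * Λ (g i) := by
      have hle : f ≤ δ • (1 : C(α, ℝ)) + ∑ i : Fin n, δ • g i := by
        rw [ContinuousMap.le_def]
        intro z
        simp only [ContinuousMap.add_apply, ContinuousMap.smul_apply,
          ContinuousMap.one_apply, ContinuousMap.sum_apply, smul_eq_mul, mul_one]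
        have h1 : ∀ i : Fin n, (if z ∈ Ks i then (1:ℝ) else 0) ≤ g i z := by
          intro i
          by_cases h : z ∈ Ks i
          · simp only [h, if_true]; exact hg1 i z h
          · simp only [h, if_false]; simpa using hg0 i z
        have h2 : (δ * k z : ℝ) ≤ ∑ i : Fin n, δ * g i z := by
          rw [← fact3 z, Finset.mul_sum]
          exact Finset.sum_le_sum fun i _ => by
            have := h1 i; nlinarith [h1 i]
        calc f z ≤ δ + δ * k z := fact4 z
          _ ≤ δ + ∑ i : Fin n, δ * g i z := by linarith
      have hmapped : Λ (δ • (1 : C(α, ℝ)) + ∑ i : Fin n, δ • g i)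
          = δ + ∑ i : Fin n, δ * Λ (g i) := by
        let ΛH : C(α, ℝ) →+ ℝ := AddMonoidHom.mk' Λ (fun a b => hadd a b)
        have hΛH : ∀ h : C(α, ℝ), ΛH h = Λ h := fun _ => rfl
        rw [hadd, hsmul, hone, mul_one]
        congr 1
        rw [← hΛH, map_sum]
        exact Finset.sum_congr rfl fun i _ => by rw [hΛH, hsmul]
      calc Λ f ≤ Λ (δ • (1 : C(α, ℝ)) + ∑ i : Fin n, δ • g i) :=
            lam_mono_fn hpos hadd hle
        _ = δ + ∑ i : Fin n, δ * Λ (g i) := hmapped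
    -- step 2
    have step2 : ∑ i : Fin n, δ * Λ (g i) ≤ δ + ∑ i : Fin n, δ * lam Λ (Ks i) := by
      have : ∀ i : Fin n, δ * Λ (g i) ≤ δ * lam Λ (Ks i) + δ * (1/n) := by
        intro i
        have := hgΛ i
        nlinarith
      calc ∑ i : Fin n, δ * Λ (g i)
          ≤ ∑ i : Fin n, (δ * lam Λ (Ks i) + δ * (1/n)) :=
            Finset.sum_le_sum fun i _ => this i
        _ = ∑ i : Fin n, δ * lam Λ (Ks i) + n * (δ * (1/n)) := by
            rw [Finset.sum_add_distrib]; simp [Finset.sum_const]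
        _ = δ + ∑ i : Fin n, δ * lam Λ (Ks i) := by
            field_simp
            ring
    -- step 3
    have step3 : ∑ i : Fin n, δ * lam Λ (Ks i) ≤ ∫ z, f z ∂μ := by
      have hlm : ∀ i : Fin n, lam Λ (Ks i) ≤ (μ (Ks i)).toReal := by
        intro i
        have h1 := lam_le_measure hpos hadd (Ks i) (hKc i)
        rw [← hμ] at h1
        exact (ENNReal.ofReal_le_iff_le_toReal (measure_ne_top μ _)).mp h1
      have hint : ∀ i : Fin n, Integrable ((Ks i).indicator fun _ => δ) μ :=
        fun i => (integrable_const δ).indicator (hKm i)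
      have hψint : Integrable (fun z => ∑ i : Fin n, (Ks i).indicator (fun _ => δ) z) μ :=
        integrable_finset_sum _ fun i _ => hint i
      have hψeq : ∫ z, (∑ i : Fin n, (Ks i).indicator (fun _ => δ) z) ∂μ
          = ∑ i : Fin n, (μ (Ks i)).toReal * δ := by
        rw [integral_finset_sum _ fun i _ => hint i]
        exact Finset.sum_congr rfl fun i _ => by
          rw [integral_indicator_const δ (hKm i)]; simp [smul_eq_mul, Measure.real]
      have hψle : ∫ z, (∑ i : Fin n, (Ks i).indicator (fun _ => δ) z) ∂μ
          ≤ ∫ z, f z ∂μ := by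
        refine integral_mono hψint hfint ?_
        intro z
        dsimp only
        have : (∑ i : Fin n, (Ks i).indicator (fun _ => δ) z)
            = δ * (∑ i : Fin n, if z ∈ Ks i then (1:ℝ) else 0) := by
          rw [Finset.mul_sum]
          exact Finset.sum_congr rfl fun i _ => by
            rw [Set.indicator_apply]
            by_cases h : z ∈ Ks i <;> simp [h]
        rw [this, fact3 z]
        exact fact5 z
      calc ∑ i : Fin n, δ * lam Λ (Ks i)
          ≤ ∑ i : Fin n, (μ (Ks i)).toReal * δ :=
            Finset.sum_le_sum fun i _ => by
              have := hlm i; nlinarith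
        _ = ∫ z, (∑ i : Fin n, (Ks i).indicator (fun _ => δ) z) ∂μ := hψeq.symm
        _ ≤ ∫ z, f z ∂μ := hψle
    calc Λ f ≤ δ + ∑ i : Fin n, δ * Λ (g i) := step1
      _ ≤ δ + (δ + ∑ i : Fin n, δ * lam Λ (Ks i)) := by linarith [step2]
      _ ≤ δ + δ + ∫ z, f z ∂μ := by linarith [step3]
      _ = 2 * ((‖f‖ + 1) / n) + ∫ z, f z ∂μ := by rw [hδdef]; ring
  -- limiting argument
  by_contra hcon
  push_neg at hcon
  set I := ∫ z, f z ∂μ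
  set η := Λ f - I with hη
  have hηpos : 0 < η := by rw [hη]; linarith
  obtain ⟨n, hngt⟩ := exists_nat_gt (2 * (‖f‖ + 1) / η)
  have hnpos : 0 < n := by
    by_contra h
    push_neg at h
    interval_cases n
    simp only [Nat.cast_zero] at hngt
    have : 0 < 2 * (‖f‖ + 1) / η := by positivity
    linarith
  have h1 := key n hnpos
  have hnR : (0:ℝ) < n := Nat.cast_pos.mpr hnpos
  have h2 : 2 * (‖f‖ + 1) / n < η := by
    rw [div_lt_iff₀ hnR]
    rw [div_lt_iff₀ hηpos] at hngt
    linarith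
  rw [hη, mul_div_assoc] at h2
  linarith

end integral

section separation
set_option linter.unusedSectionVars false

theorem pietschFunctional (F : Set C(α, ℝ)) (hconv : Convex ℝ F)
    (hcone : ∀ (ε : ℝ), 0 < ε → ∀ f ∈ F, ε • f ∈ F) (h0 : (0 : C(α, ℝ)) ∈ F)
    (hF : ∀ f ∈ F, ∃ z, f z ≤ 0) :
    ∃ Λ : C(α, ℝ) → ℝ, (∀ f g, Λ (f + g) = Λ f + Λ g) ∧
      (∀ (c : ℝ) (f : C(α, ℝ)), Λ (c • f) = c * Λ f) ∧
      (∀ f, 0 ≤ f → 0 ≤ Λ f) ∧ Λ 1 = 1 ∧ (∀ f ∈ F, Λ f ≤ 0) := by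
  set P : Set C(α, ℝ) := {f | ∀ z, 0 < f z} with hP
  have hPopen : IsOpen P := by
    rw [Metric.isOpen_iff]
    intro f hf
    obtain ⟨z₀, -, hz₀⟩ := isCompact_univ.exists_isMinOn Set.univ_nonempty
      f.continuous.continuousOn
    refine ⟨f z₀, hf z₀, ?_⟩
    intro g hg
    intro z
    have h1 : ‖g - f‖ < f z₀ := by rwa [← dist_eq_norm]
    have h2 : |(g - f) z| ≤ ‖g - f‖ := by
      have := (g - f).norm_coe_le_norm z
      simpa using this
    have h3 : (g - f) z = g z - f z := by simp
    have h4 : f z₀ ≤ f z := hz₀ (Set.mem_univ z)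
    rw [h3] at h2
    have := abs_le.mp h2
    linarith [this.1]
  have hPconv : Convex ℝ P := by
    intro f hf g hg a b ha hb hab
    intro z
    have hfz := hf z
    have hgz := hg z
    have : (a • f + b • g) z = a * f z + b * g z := by simp
    rw [this]
    rcases eq_or_lt_of_le ha with h | h
    · rw [← h] at hab ⊢; simp only [zero_mul, zero_add]
      rw [zero_add] at hab; rw [hab]; linarith
    · nlinarith
  have hdisj : Disjoint P F := by
    rw [Set.disjoint_left]
    intro f hfP hfF
    obtain ⟨z, hz⟩ := hF f hfF
    exact absurd (hfP z) (not_lt.mpr hz)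
  obtain ⟨L, c, hPlt, hFge⟩ := geometric_hahn_banach_open hPconv hPopen hconv hdisj
  have hc0 : c ≤ 0 := by have := hFge 0 h0; simpa using this
  have hone : (1 : C(α, ℝ)) ∈ P := fun z => by simp
  have hL1 : L 1 < 0 := lt_of_lt_of_le (hPlt 1 hone) hc0
  have hL1ne : L 1 ≠ 0 := ne_of_lt hL1
  have hLnonpos : ∀ f : C(α, ℝ), 0 ≤ f → L f ≤ 0 := by
    intro f hf
    by_contra h
    push_neg at h
    have hε : 0 < L f / (2 * (-L 1)) := div_pos h (by linarith)
    have hmem : f + (L f / (2 * (-L 1))) • (1 : C(α, ℝ)) ∈ P := by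
      intro z
      have h0f : (0:ℝ) ≤ f z := by
        have := hf z
        simpa [ContinuousMap.toFun_eq_coe] using this
      simp only [ContinuousMap.add_apply, ContinuousMap.smul_apply,
        ContinuousMap.one_apply, smul_eq_mul, mul_one]
      linarith
    have := hPlt _ hmem
    rw [map_add, ContinuousLinearMap.map_smul, smul_eq_mul] at this
    have hval : L f / (2 * -L 1) * L 1 = -(L f / 2) := by
      field_simp
    rw [hval] at this
    linarith
  have hFnonneg : ∀ f ∈ F, 0 ≤ L f := by
    intro f hfF
    by_contra h
    push_neg at h
    have hε : 0 < (c - 1) / L f := div_pos_of_neg_of_neg (by linarith) h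
    have := hFge _ (hcone _ hε f hfF)
    rw [ContinuousLinearMap.map_smul, smul_eq_mul] at this
    rw [div_mul_cancel₀ _ (ne_of_lt h)] at this
    linarith
  refine ⟨fun f => L f / L 1, ?_, ?_, ?_, ?_, ?_⟩
  · intro f g; dsimp only; rw [map_add, add_div]
  · intro r f; dsimp only; rw [ContinuousLinearMap.map_smul, smul_eq_mul, mul_div_assoc]
  · intro f hf
    dsimp only
    exact div_nonneg_of_nonpos (hLnonpos f hf) hL1.le
  · dsimp only; exact div_self hL1ne
  · intro f hf
    dsimp only
    exact div_nonpos_of_nonneg_of_nonpos (hFnonneg f hf) hL1.le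

theorem pietsch_domination (F : Set C(α, ℝ)) (hconv : Convex ℝ F)
    (hcone : ∀ (ε : ℝ), 0 < ε → ∀ f ∈ F, ε • f ∈ F) (h0 : (0 : C(α, ℝ)) ∈ F)
    (hF : ∀ f ∈ F, ∃ z, f z ≤ 0) :
    ∃ μ : Measure α, IsProbabilityMeasure μ ∧
      ∀ (a : ℝ) (g : C(α, ℝ)), 0 ≤ g → a • (1 : C(α, ℝ)) - g ∈ F →
        a ≤ ∫ z, g z ∂μ := by
  obtain ⟨Λ, hadd, hsmul, hpos, hone, hFle⟩ := pietschFunctional F hconv hcone h0 hF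
  refine ⟨(rieszContent Λ hpos hadd).measure,
    rieszMeasure_isProbability hpos hadd hone, ?_⟩
  intro a g hg hmem
  have h1 : Λ (a • (1 : C(α, ℝ)) - g) ≤ 0 := hFle _ hmem
  have h2 : Λ (a • (1 : C(α, ℝ)) - g) = a - Λ g := by
    have h3 : Λ (a • (1 : C(α, ℝ)) - g) + Λ g = Λ (a • (1 : C(α, ℝ))) := by
      rw [← hadd]; congr 1; ext z; simp
    rw [hsmul, hone, mul_one] at h3
    linarith
  have h4 : Λ g ≤ ∫ z, g z ∂(rieszContent Λ hpos hadd).measure :=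
    lam_fn_le_integral hpos hadd hsmul hone g hg
  linarith

end separation

end PietschAux

namespace PietschMain

theorem isCompact_dualBall (X : Type*) [NormedAddCommGroup X] [NormedSpace ℝ X] :
    IsCompact (dualBall X) := by
  have heq : dualBall X = WeakDual.toStrongDual ⁻¹' Metric.closedBall 0 1 := by
    ext φ
    simp only [dualBall, Set.mem_setOf_eq, Set.mem_preimage, Metric.mem_closedBall,
      dist_zero_right]
    constructor
    · intro h
      refine ContinuousLinearMap.opNorm_le_bound _ zero_le_one ?_
      intro x
      simpa using h x
    · intro h x
      have := ContinuousLinearMap.le_opNorm (WeakDual.toStrongDual φ) x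
      have h2 : ‖WeakDual.toStrongDual φ‖ * ‖x‖ ≤ 1 * ‖x‖ :=
        mul_le_mul_of_nonneg_right h (norm_nonneg x)
      simpa using this.trans h2
  rw [heq]
  exact WeakDual.isCompact_closedBall (𝕜 := ℝ) (E := X) 0 1

instance (X : Type*) [NormedAddCommGroup X] [NormedSpace ℝ X] :
    CompactSpace (dualBall X) :=
  isCompact_iff_compactSpace.mp (isCompact_dualBall X)

instance (X : Type*) [NormedAddCommGroup X] [NormedSpace ℝ X] :
    Nonempty (dualBall X) :=
  ⟨⟨0, fun x => by
    have h : (0 : WeakDual ℝ X) x = 0 := rfl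
    simp [dualBall, h]⟩⟩

/-- The evaluation-power function on the dual ball, as a continuous map. -/
def hm (X : Type*) [NormedAddCommGroup X] [NormedSpace ℝ X] (p : ℝ) (hp : 1 ≤ p) (x : X) :
    C(dualBall X, ℝ) :=
  ⟨fun φ => ‖(φ : WeakDual ℝ X) x‖ ^ p,
    (((WeakDual.eval_continuous x).comp continuous_subtype_val).norm).rpow_const
      (fun _ => Or.inr (le_trans zero_le_one hp))⟩

theorem hm_nonneg {p : ℝ} (hp : 1 ≤ p) (x : X) : (0 : C(dualBall X, ℝ)) ≤ hm X p hp x := by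
  rw [ContinuousMap.le_def]
  intro φ
  simp only [ContinuousMap.zero_apply, hm, ContinuousMap.coe_mk]
  exact Real.rpow_nonneg (norm_nonneg _) p

theorem hm_le {p : ℝ} (hp : 1 ≤ p) (x : X) (φ : dualBall X) :
    hm X p hp x φ ≤ ‖x‖ ^ p := by
  simp only [hm, ContinuousMap.coe_mk]
  exact Real.rpow_le_rpow (norm_nonneg _) (φ.2 x) (le_trans zero_le_one hp)


set_option linter.unusedSectionVars false

/-- Generator functions for the Pietsch cone. -/
def gen (p : ℝ) (hp : 1 ≤ p) (u : X → Y) (C : ℝ) (x : X) : C(dualBall X, ℝ) :=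
  ‖u x - u 0‖ ^ p • (1 : C(dualBall X, ℝ)) - C ^ p • hm X p hp x

/-- The Pietsch cone of functions on the dual ball. -/
def FF (p : ℝ) (hp : 1 ≤ p) (u : X → Y) (C : ℝ) : Set C(dualBall X, ℝ) :=
  {f | ∃ (m : ℕ) (x : Fin m → X) (t : Fin m → ℝ),
    (∀ j, 0 ≤ t j) ∧ f = ∑ j, t j • gen p hp u C (x j)}

variable {p : ℝ} (hp : 1 ≤ p) (u : X → Y) {C : ℝ}

theorem FF_zero_mem : (0 : C(dualBall X, ℝ)) ∈ FF p hp u C :=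
  ⟨0, Fin.elim0, Fin.elim0, fun j => j.elim0, by simp⟩

theorem FF_smul_mem : ∀ (ε : ℝ), 0 < ε → ∀ f ∈ FF p hp u C, ε • f ∈ FF p hp u C := by
  rintro ε hε f ⟨m, x, t, ht, rfl⟩
  refine ⟨m, x, ε • t, fun j => mul_nonneg hε.le (ht j), ?_⟩
  rw [Finset.smul_sum]
  exact Finset.sum_congr rfl fun j _ => by
    simp [Pi.smul_apply, smul_smul]

theorem FF_convex : Convex ℝ (FF p hp u C) := by
  rintro f₁ ⟨m₁, x₁, t₁, ht₁, rfl⟩ f₂ ⟨m₂, x₂, t₂, ht₂, rfl⟩ a b ha hb hab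
  refine ⟨m₁ + m₂, Fin.append x₁ x₂, Fin.append (a • t₁) (b • t₂), ?_, ?_⟩
  · intro j
    refine Fin.addCases (fun i => ?_) (fun i => ?_) j
    · rw [Fin.append_left]
      exact mul_nonneg ha (ht₁ i)
    · rw [Fin.append_right]
      exact mul_nonneg hb (ht₂ i)
  · rw [Fin.sum_univ_add]
    congr 1
    · rw [Finset.smul_sum]
      exact Finset.sum_congr rfl fun i _ => by
        rw [Fin.append_left, Fin.append_left, Pi.smul_apply, smul_smul, smul_eq_mul]
    · rw [Finset.smul_sum]
      exact Finset.sum_congr rfl fun i _ => by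
        rw [Fin.append_right, Fin.append_right, Pi.smul_apply, smul_smul, smul_eq_mul]


theorem hm_apply (x : X) (φ : dualBall X) :
    hm X p hp x φ = ‖(φ : WeakDual ℝ X) x‖ ^ p := rfl

theorem bddAbove_sum_hm {m : ℕ} (x : Fin m → X) (t : Fin m → ℝ) (ht : ∀ j, 0 ≤ t j) :
    BddAbove (Set.range fun φ : dualBall X => ∑ j, t j * hm X p hp (x j) φ) := by
  refine ⟨∑ j, t j * ‖x j‖ ^ p, ?_⟩
  rintro r ⟨φ, rfl⟩
  exact Finset.sum_le_sum fun j _ =>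
    mul_le_mul_of_nonneg_left (hm_le hp (x j) φ) (ht j)

theorem sum_hm_nonneg {m : ℕ} (x : Fin m → X) (t : Fin m → ℝ) (ht : ∀ j, 0 ≤ t j)
    (φ : dualBall X) : 0 ≤ ∑ j, t j * hm X p hp (x j) φ :=
  Finset.sum_nonneg fun j _ => mul_nonneg (ht j)
    (Real.rpow_nonneg (norm_nonneg _) p)

variable (hC : 0 ≤ C)
  (hsum : ∀ (m : ℕ) (x : Fin m → X),
      (∑ j, ‖u (x j) - u 0‖ ^ p) ^ (1 / p) ≤
        C * ⨆ φ : dualBall X, (∑ j, ‖(φ : WeakDual ℝ X) (x j)‖ ^ p) ^ (1 / p))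

include hp hC hsum in
theorem sum_le_nat {m : ℕ} (x : Fin m → X) (k : Fin m → ℕ) :
    ∑ j, (k j : ℝ) * ‖u (x j) - u 0‖ ^ p ≤
      C ^ p * ⨆ φ : dualBall X, ∑ j, (k j : ℝ) * hm X p hp (x j) φ := by
  have hp0 : (0:ℝ) < p := lt_of_lt_of_le one_pos hp
  have hpne : p ≠ 0 := ne_of_gt hp0
  have hip : (0:ℝ) ≤ 1 / p := by positivity
  set σ := (Σ j : Fin m, Fin (k j)) with hσ
  set N := Fintype.card σ with hN
  set e : Fin N ≃ σ := (Fintype.equivFin σ).symm with he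
  set y : Fin N → X := fun i => x (e i).1 with hy
  have sumeq : ∀ F : X → ℝ, ∑ i, F (y i) = ∑ j, (k j : ℝ) * F (x j) := by
    intro F
    rw [hy]
    rw [Fintype.sum_equiv e (fun i => F (x (e i).1)) (fun σ' => F (x σ'.1)) (fun i => rfl)]
    rw [← Finset.univ_sigma_univ, Finset.sum_sigma]
    refine Finset.sum_congr rfl fun j _ => ?_
    dsimp only
    rw [Finset.sum_const, Finset.card_univ, Fintype.card_fin, nsmul_eq_mul]
  set T := ⨆ φ : dualBall X, ∑ j, (k j : ℝ) * hm X p hp (x j) φ with hT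
  have hkt : ∀ j, (0:ℝ) ≤ (k j : ℝ) := fun j => Nat.cast_nonneg _
  have hT0 : 0 ≤ T := by
    rw [hT]
    exact Real.iSup_nonneg fun φ => sum_hm_nonneg hp x _ hkt φ
  have key := hsum N y
  have hAeq : ∑ i, ‖u (y i) - u 0‖ ^ p = ∑ j, (k j : ℝ) * ‖u (x j) - u 0‖ ^ p :=
    sumeq fun x' => ‖u x' - u 0‖ ^ p
  have hA0 : 0 ≤ ∑ i, ‖u (y i) - u 0‖ ^ p :=
    Finset.sum_nonneg fun i _ => Real.rpow_nonneg (norm_nonneg _) p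
  have hsup : (⨆ φ : dualBall X, (∑ i, ‖(φ : WeakDual ℝ X) (y i)‖ ^ p) ^ (1 / p))
      ≤ T ^ (1 / p) := by
    refine ciSup_le fun φ => ?_
    have h1 : ∑ i, ‖(φ : WeakDual ℝ X) (y i)‖ ^ p
        = ∑ j, (k j : ℝ) * hm X p hp (x j) φ := sumeq fun x' => hm X p hp x' φ
    rw [h1]
    refine Real.rpow_le_rpow (sum_hm_nonneg hp x _ hkt φ) ?_ hip
    exact le_ciSup (bddAbove_sum_hm hp x _ hkt) φ
  have key2 : (∑ i, ‖u (y i) - u 0‖ ^ p) ^ (1 / p) ≤ C * T ^ (1 / p) :=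
    key.trans (mul_le_mul_of_nonneg_left hsup hC)
  have main : ∑ i, ‖u (y i) - u 0‖ ^ p ≤ C ^ p * T := by
    have h3 := Real.rpow_le_rpow (Real.rpow_nonneg hA0 _) key2 hp0.le
    rw [one_div, Real.rpow_inv_rpow hA0 hpne,
      Real.mul_rpow hC (Real.rpow_nonneg hT0 _), Real.rpow_inv_rpow hT0 hpne] at h3
    exact h3
  rw [hAeq] at main
  exact main

include hp hC hsum in
theorem sum_le_real {m : ℕ} (x : Fin m → X) (t : Fin m → ℝ) (ht : ∀ j, 0 ≤ t j) :
    ∑ j, t j * ‖u (x j) - u 0‖ ^ p ≤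
      C ^ p * ⨆ φ : dualBall X, ∑ j, t j * hm X p hp (x j) φ := by
  set T := ⨆ φ : dualBall X, ∑ j, t j * hm X p hp (x j) φ with hT
  set M : ℝ := ∑ j, ‖x j‖ ^ p with hM
  have hM0 : 0 ≤ M := Finset.sum_nonneg fun j _ => Real.rpow_nonneg (norm_nonneg _) p
  have hCp : (0:ℝ) ≤ C ^ p := Real.rpow_nonneg hC p
  have hs0 : ∀ j, (0:ℝ) ≤ ‖u (x j) - u 0‖ ^ p :=
    fun j => Real.rpow_nonneg (norm_nonneg _) p
  set LHS := ∑ j, t j * ‖u (x j) - u 0‖ ^ p with hLHS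
  have claimN : ∀ n : ℕ, 0 < n →
      (n : ℝ) * LHS ≤ (n : ℝ) * (C ^ p * T) + C ^ p * M := by
    intro n hn
    set k : Fin m → ℕ := fun j => ⌈t j * n⌉₊ with hk
    have hknn : ∀ j, t j * n ≤ k j := fun j => Nat.le_ceil _
    have hkub : ∀ j, (k j : ℝ) ≤ t j * n + 1 :=
      fun j => (Nat.ceil_lt_add_one (mul_nonneg (ht j) (Nat.cast_nonneg n))).le
    have h1 : (n : ℝ) * LHS ≤ ∑ j, (k j : ℝ) * ‖u (x j) - u 0‖ ^ p := by
      rw [hLHS, Finset.mul_sum]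
      refine Finset.sum_le_sum fun j _ => ?_
      have := hknn j
      have := hs0 j
      nlinarith
    have h2 := sum_le_nat hp u hC hsum x k
    have h3 : (⨆ φ : dualBall X, ∑ j, (k j : ℝ) * hm X p hp (x j) φ)
        ≤ (n : ℝ) * T + M := by
      refine ciSup_le fun φ => ?_
      have hstep : ∀ j, (k j : ℝ) * hm X p hp (x j) φ
          ≤ (n : ℝ) * (t j * hm X p hp (x j) φ) + hm X p hp (x j) φ := by
        intro j
        have h4 := hkub j
        have h5 : (0:ℝ) ≤ hm X p hp (x j) φ := Real.rpow_nonneg (norm_nonneg _) p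
        nlinarith
      calc ∑ j, (k j : ℝ) * hm X p hp (x j) φ
          ≤ ∑ j, ((n : ℝ) * (t j * hm X p hp (x j) φ) + hm X p hp (x j) φ) :=
            Finset.sum_le_sum fun j _ => hstep j
        _ = (n : ℝ) * (∑ j, t j * hm X p hp (x j) φ) + ∑ j, hm X p hp (x j) φ := by
            rw [Finset.sum_add_distrib, Finset.mul_sum]
        _ ≤ (n : ℝ) * T + M := by
            have h6 : (∑ j, t j * hm X p hp (x j) φ) ≤ T :=
              le_ciSup (bddAbove_sum_hm hp x t ht) φ
            have h7 : (∑ j, hm X p hp (x j) φ) ≤ M := by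
              rw [hM]
              exact Finset.sum_le_sum fun j _ => hm_le hp (x j) φ
            have hn0 : (0:ℝ) ≤ n := Nat.cast_nonneg _
            nlinarith
    calc (n : ℝ) * LHS ≤ ∑ j, (k j : ℝ) * ‖u (x j) - u 0‖ ^ p := h1
      _ ≤ C ^ p * ⨆ φ : dualBall X, ∑ j, (k j : ℝ) * hm X p hp (x j) φ := h2
      _ ≤ C ^ p * ((n : ℝ) * T + M) := mul_le_mul_of_nonneg_left h3 hCp
      _ = (n : ℝ) * (C ^ p * T) + C ^ p * M := by ring
  by_contra hcon
  push_neg at hcon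
  set η := LHS - C ^ p * T with hη
  have hηpos : 0 < η := by rw [hη]; linarith
  obtain ⟨n, hngt⟩ := exists_nat_gt (C ^ p * M / η)
  have hnpos : 0 < n := by
    by_contra h
    push_neg at h
    interval_cases n
    simp only [Nat.cast_zero] at hngt
    have : 0 ≤ C ^ p * M / η := by positivity
    linarith
  have h1 := claimN n hnpos
  have h2 : C ^ p * M < (n : ℝ) * η := by
    rw [div_lt_iff₀ hηpos] at hngt
    linarith
  have h3 : (n : ℝ) * η = (n : ℝ) * LHS - (n : ℝ) * (C ^ p * T) := by
    rw [hη]; ring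
  linarith

include hp hC hsum in
theorem FF_exists_nonpos : ∀ f ∈ FF p hp u C, ∃ z, f z ≤ 0 := by
  rintro f ⟨m, x, t, ht, rfl⟩
  by_contra hcon
  push_neg at hcon
  set f := ∑ j, t j • gen p hp u C (x j) with hf
  obtain ⟨z₀, -, hz₀⟩ := isCompact_univ.exists_isMinOn Set.univ_nonempty
    f.continuous.continuousOn
  set ε := f z₀ with hε
  have hεpos : 0 < ε := hcon z₀
  have feval : ∀ φ : dualBall X, f φ =
      ∑ j, t j * ‖u (x j) - u 0‖ ^ p - C ^ p * ∑ j, t j * hm X p hp (x j) φ := by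
    intro φ
    rw [hf]
    rw [ContinuousMap.sum_apply]
    rw [Finset.mul_sum, ← Finset.sum_sub_distrib]
    refine Finset.sum_congr rfl fun j _ => ?_
    simp only [ContinuousMap.smul_apply, gen, ContinuousMap.sub_apply,
      ContinuousMap.one_apply, smul_eq_mul, mul_one]
    ring
  have hbound : ∀ φ : dualBall X,
      C ^ p * ∑ j, t j * hm X p hp (x j) φ ≤
        ∑ j, t j * ‖u (x j) - u 0‖ ^ p - ε := by
    intro φ
    have h1 : ε ≤ f φ := hz₀ (Set.mem_univ φ)
    rw [feval φ] at h1
    linarith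
  have hCp : (0:ℝ) ≤ C ^ p := Real.rpow_nonneg hC p
  have hTle : C ^ p * (⨆ φ : dualBall X, ∑ j, t j * hm X p hp (x j) φ) ≤
      ∑ j, t j * ‖u (x j) - u 0‖ ^ p - ε := by
    rw [Real.mul_iSup_of_nonneg hCp]
    exact ciSup_le fun φ => hbound φ
  have h2 := sum_le_real hp u hC hsum x t ht
  linarith

end PietschMain

theorem stmt14 (p : ℝ) (hp : 1 ≤ p) (u : X → Y) (C : ℝ) (hC : 0 ≤ C)
    (hsum : ∀ (m : ℕ) (x : Fin m → X),
      (∑ j, ‖u (x j) - u 0‖ ^ p) ^ (1 / p) ≤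
        C * ⨆ φ : dualBall X, (∑ j, ‖(φ : WeakDual ℝ X) (x j)‖ ^ p) ^ (1 / p)) :
    ∃ μ : Measure (dualBall X), IsProbabilityMeasure μ ∧
      ∀ x : X, ‖u x - u 0‖ ≤
        C * (∫ φ : dualBall X, ‖(φ : WeakDual ℝ X) x‖ ^ p ∂μ) ^ (1 / p) := by
  classical
  obtain ⟨μ, hprob, hdom⟩ := PietschAux.pietsch_domination (α := ↥(dualBall X))
    (PietschMain.FF p hp u C) (PietschMain.FF_convex hp u)
    (PietschMain.FF_smul_mem hp u) (PietschMain.FF_zero_mem hp u)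
    (PietschMain.FF_exists_nonpos hp u hC hsum)
  refine ⟨μ, hprob, ?_⟩
  intro x
  have hpne : p ≠ 0 := ne_of_gt (lt_of_lt_of_le one_pos hp)
  have hip : (0:ℝ) ≤ 1 / p := by
    rw [one_div]
    exact inv_nonneg.mpr (by linarith)
  have hgenF : PietschMain.gen p hp u C x ∈ PietschMain.FF p hp u C := by
    refine ⟨1, fun _ => x, fun _ => 1, fun j => zero_le_one, ?_⟩
    rw [Fin.sum_univ_one, one_smul]
  have hg0 : (0 : C(dualBall X, ℝ)) ≤ C ^ p • PietschMain.hm X p hp x := by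
    rw [ContinuousMap.le_def]; intro φ
    simp only [ContinuousMap.zero_apply, ContinuousMap.smul_apply, smul_eq_mul]
    exact mul_nonneg (Real.rpow_nonneg hC p) (Real.rpow_nonneg (norm_nonneg _) p)
  have hmem : ‖u x - u 0‖ ^ p • (1 : C(dualBall X, ℝ)) - C ^ p • PietschMain.hm X p hp x
      ∈ PietschMain.FF p hp u C := hgenF
  have hkey := hdom (‖u x - u 0‖ ^ p) (C ^ p • PietschMain.hm X p hp x) hg0 hmem
  have hint : ∫ z, (C ^ p • PietschMain.hm X p hp x) z ∂μ
      = C ^ p * ∫ φ : dualBall X, ‖(φ : WeakDual ℝ X) x‖ ^ p ∂μ := by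
    simp only [ContinuousMap.smul_apply, smul_eq_mul]
    rw [integral_const_mul]
    rfl
  rw [hint] at hkey
  set I := ∫ φ : dualBall X, ‖(φ : WeakDual ℝ X) x‖ ^ p ∂μ with hI
  have hI0 : 0 ≤ I := integral_nonneg fun φ => Real.rpow_nonneg (norm_nonneg _) p
  calc ‖u x - u 0‖ = (‖u x - u 0‖ ^ p) ^ (1 / p) := by
        rw [one_div, Real.rpow_rpow_inv (norm_nonneg _) hpne]
    _ ≤ (C ^ p * I) ^ (1 / p) :=
        Real.rpow_le_rpow (Real.rpow_nonneg (norm_nonneg _) p) hkey hip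
    _ = C * I ^ (1 / p) := by
        rw [Real.mul_rpow (Real.rpow_nonneg hC p) hI0, one_div,
          Real.rpow_rpow_inv hC hpne]
end
end
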